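/- Let P ∈ A = F_q[θ] be monic irreducible and s = (s_1,…,s_r) ∈ ℕ^r with P ∤ Γ_{s_1}⋯Γ_{s_r}. Define ζ_P(s) := Σ_{deg P > deg a_1 > ⋯ > deg a_r, a_i monic} ∏ a_i^{−s_i} mod P ∈ A/(P). Expand H_{s_i−1} = Σ_{j=0}^{m_i} u_{ij} t^j with u_{ij} ∈ A. Then ζ_P(s) = (1/Γ_s) Σ_{j = (j_1,…,j_r), 0 ≤ j_i ≤ m_i} θ^{j_1+⋯+j_r} · Σ_{deg P > i_1 > ⋯ > i_r ≥ 0} (u_{1 j_1}^{q^{i_1}} ⋯ u_{r j_r}^{q^{i_r}})/(L_{i_1}^{s_1}⋯L_{i_r}^{s_r}) mod P, where Γ_s := Γ_{s_1}⋯Γ_{s_r}. -/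

import Mathlib

open Polynomial

noncomputable section

variable (Fq : Type) [Field Fq] [Fintype Fq]

/-- `D_0 = 1` and `D_i = ∏_{j=0}^{i-1} (θ^{q^i} - θ^{q^j})` in `A = F_q[θ]`. -/
def carlitzD (i : ℕ) : Polynomial Fq :=
  ∏ j ∈ Finset.range i, ((X : Polynomial Fq) ^ (Fintype.card Fq) ^ i - X ^ (Fintype.card Fq) ^ j)

/-- `L_0 = 1` and `L_i = ∏_{j=1}^{i} (θ - θ^{q^j})` in `A = F_q[θ]`. -/
def carlitzL (i : ℕ) : Polynomial Fq :=
  ∏ j ∈ Finset.Icc 1 i, ((X : Polynomial Fq) - X ^ (Fintype.card Fq) ^ j)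

/-- The Carlitz factorial `Γ_m` (for `m ≥ 1`): writing `m - 1 = Σ n_i q^i` in base `q`,
`Γ_m = ∏ D_i^{n_i}`.  (The `i`-th base-`q` digit of `m - 1` is `(m-1)/q^i % q`.) -/
def carlitzΓ (m : ℕ) : Polynomial Fq :=
  ∏ i ∈ Finset.range m,
    (carlitzD Fq i) ^ ((m - 1) / (Fintype.card Fq) ^ i % (Fintype.card Fq))

/-- The ambient polynomial ring `F_q[θ, t]`, with `θ = X 0` and `t = X 1`. -/
abbrev ATRing := MvPolynomial (Fin 2) Fq

/-- `θ` as an element of `F_q[θ, t]`. -/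
def θS : ATRing Fq := MvPolynomial.X 0

/-- `t` as an element of `F_q[θ, t]`. -/
def tS : ATRing Fq := MvPolynomial.X 1

/-- `G_0(θ) = 1` and `G_n(θ) = ∏_{i=1}^{n} (t^{q^n} - θ^{q^i}) ∈ F_q[t, θ]`
(the polynomial `G_n(y)` evaluated at `y = θ`). -/
def ATG (n : ℕ) : ATRing Fq :=
  ∏ i ∈ Finset.Icc 1 n, (tS Fq ^ (Fintype.card Fq) ^ n - θS Fq ^ (Fintype.card Fq) ^ i)

/-- Inclusion `F_q[θ] → F_q[θ, t]`. -/
def toSθ : Polynomial Fq →+* ATRing Fq :=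
  Polynomial.eval₂RingHom MvPolynomial.C (θS Fq)

/-- The substitution `θ ↦ t`, `F_q[θ] → F_q[θ, t]` (used for `D_i|_{θ=t}` and
`Γ_{n+1}|_{θ=t}`). -/
def toSt : Polynomial Fq →+* ATRing Fq :=
  Polynomial.eval₂RingHom MvPolynomial.C (tS Fq)

/-- Inclusion `A[t] = F_q[θ][t] → F_q[θ, t]`. -/
def toS₂ : Polynomial (Polynomial Fq) →+* ATRing Fq :=
  Polynomial.eval₂RingHom (toSθ Fq) (tS Fq)

/-- Inclusion of `F_q[θ, t]` into its fraction field. -/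
def ιF : ATRing Fq →+* FractionRing (ATRing Fq) :=
  algebraMap (ATRing Fq) (FractionRing (ATRing Fq))

/-- `H : ℕ → A[t]` is the family of Anderson–Thakur polynomials iff it satisfies the
generating identity
`(1 - Σ_{i≥0} (G_i(θ)/D_i|_{θ=t}) x^{q^i}) ⁻¹ = Σ_{n≥0} (H_n/Γ_{n+1}|_{θ=t}) x^n`,
i.e. the product of the two series is `1`, in the power series ring over the fraction
field of `F_q[θ, t]`. -/
def IsATFamily (H : ℕ → Polynomial (Polynomial Fq)) : Prop :=
  (1 - PowerSeries.mk fun N => ∑ i ∈ Finset.range (N + 1),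
      if (Fintype.card Fq) ^ i = N then
        ιF Fq (ATG Fq i) / ιF Fq (toSt Fq (carlitzD Fq i)) else 0) *
    (PowerSeries.mk fun n =>
      ιF Fq (toS₂ Fq (H n)) / ιF Fq (toSt Fq (carlitzΓ Fq (n + 1)))) = 1

/-- For `H = Σ_j u_j t^j ∈ A[t]`, the twist-and-evaluate `H^{(i)}|_{t=θ} = Σ_j u_j^{q^i} θ^j ∈ A`,
where `H^{(i)} := Σ_j u_j^{q^i} t^j`. -/
def twistEval (H : Polynomial (Polynomial Fq)) (i : ℕ) : Polynomial Fq :=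
  ∑ j ∈ Finset.range (H.natDegree + 1), (H.coeff j) ^ (Fintype.card Fq) ^ i * X ^ j


section AuxMZV
variable {Fq : Type} [Field Fq] [Fintype Fq]

local notation "qq" => Fintype.card Fq

lemma mz_exists_char : ∃ p f : ℕ, p.Prime ∧ CharP Fq p ∧ 0 < f ∧ qq = p ^ f := by
  obtain ⟨p, hc⟩ := CharP.exists Fq
  haveI := hc
  have hp : p.Prime := CharP.char_is_prime Fq p
  obtain ⟨f, -, hf⟩ := FiniteField.card Fq p
  exact ⟨p, f, hp, hc, f.2, hf⟩

lemma mz_one_lt_q : 1 < qq := Fintype.one_lt_card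

lemma mz_q_ne_zero : (qq : ℕ) ≠ 0 := Fintype.card_ne_zero

lemma mz_qpow_ne_zero (j : ℕ) : qq ^ j ≠ 0 := pow_ne_zero _ mz_q_ne_zero

lemma mz_add_pow_q {R : Type} [CommRing R] [Algebra Fq R] [Nontrivial R] (j : ℕ) (x y : R) :
    (x + y) ^ qq ^ j = x ^ qq ^ j + y ^ qq ^ j := by
  obtain ⟨p, f, hp, hc, hf0, hcard⟩ := mz_exists_char (Fq := Fq)
  haveI := hc; haveI : Fact p.Prime := ⟨hp⟩
  haveI : CharP R p := charP_of_injective_algebraMap (algebraMap Fq R).injective p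
  rw [hcard, ← pow_mul, add_pow_char_pow, pow_mul]

lemma mz_sub_pow_q {R : Type} [CommRing R] [Algebra Fq R] [Nontrivial R] (j : ℕ) (x y : R) :
    (x - y) ^ qq ^ j = x ^ qq ^ j - y ^ qq ^ j := by
  obtain ⟨p, f, hp, hc, hf0, hcard⟩ := mz_exists_char (Fq := Fq)
  haveI := hc; haveI : Fact p.Prime := ⟨hp⟩
  haveI : CharP R p := charP_of_injective_algebraMap (algebraMap Fq R).injective p
  rw [hcard, ← pow_mul, sub_pow_char_pow, pow_mul]

lemma mz_add_pow_q1 {R : Type} [CommRing R] [Algebra Fq R] [Nontrivial R] (x y : R) :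
    (x + y) ^ qq = x ^ qq + y ^ qq := by
  simpa using mz_add_pow_q (Fq := Fq) 1 x y

lemma mz_sub_pow_q1 {R : Type} [CommRing R] [Algebra Fq R] [Nontrivial R] (x y : R) :
    (x - y) ^ qq = x ^ qq - y ^ qq := by
  simpa using mz_sub_pow_q (Fq := Fq) 1 x y

lemma mz_sum_pow_q {R : Type} [CommRing R] [Algebra Fq R] [Nontrivial R] {ι : Type}
    (s : Finset ι) (g : ι → R) (j : ℕ) :
    (∑ i ∈ s, g i) ^ qq ^ j = ∑ i ∈ s, g i ^ qq ^ j := by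
  classical
  induction s using Finset.induction with
  | empty => simp [zero_pow (mz_qpow_ne_zero (Fq := Fq) j)]
  | insert _ _ hx ih =>
    rw [Finset.sum_insert hx, Finset.sum_insert hx, mz_add_pow_q, ih]

lemma mz_fq_pow_q (c : Fq) (j : ℕ) : c ^ qq ^ j = c := FiniteField.pow_card_pow j c

/-- `∏_{c ∈ Fq} (X - C c) = X^q - X`. -/
lemma mz_prod_X_sub_C :
    ∏ c : Fq, ((X : Polynomial Fq) - C c) = X ^ qq - X := by
  classical
  have hlt : (1 : WithBot ℕ) < (qq : ℕ) := by exact_mod_cast mz_one_lt_q (Fq := Fq)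
  have hmonic : (X ^ qq - X : Polynomial Fq).Monic := by
    apply (Polynomial.monic_X_pow qq).sub_of_left
    rw [Polynomial.degree_X_pow]
    exact Polynomial.degree_X_le.trans_lt hlt
  have hroots := FiniteField.roots_X_pow_card_sub_X Fq
  have hdeg : (X ^ qq - X : Polynomial Fq).natDegree = qq := by
    rw [Polynomial.natDegree_sub_eq_left_of_natDegree_lt] <;>
      simp [Polynomial.natDegree_X_pow, mz_one_lt_q]
  have hcard : Multiset.card (X ^ qq - X : Polynomial Fq).roots
      = (X ^ qq - X : Polynomial Fq).natDegree := by
    rw [hroots, hdeg]; simp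
  have h2 := Polynomial.C_leadingCoeff_mul_prod_multiset_X_sub_C hcard
  rw [hmonic.leadingCoeff, map_one, one_mul, hroots] at h2
  rw [← h2]
  rfl

/-- `D_{i+1} = (X^{q^{i+1}} - X) * D_i^q`. -/
lemma mz_D_succ (i : ℕ) :
    carlitzD Fq (i + 1) = ((X : Polynomial Fq) ^ qq ^ (i + 1) - X) * carlitzD Fq i ^ qq := by
  unfold carlitzD
  rw [Finset.prod_range_succ']
  have h1 : ∀ j : ℕ, (X : Polynomial Fq) ^ qq ^ (i + 1) - X ^ qq ^ (j + 1)
      = ((X : Polynomial Fq) ^ qq ^ i - X ^ qq ^ j) ^ qq := by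
    intro j
    rw [mz_sub_pow_q1, ← pow_mul, ← pow_mul, ← pow_succ, ← pow_succ]
  simp_rw [h1, pow_zero, pow_one]
  rw [Finset.prod_pow, mul_comm]

/-- `L_{i+1} = (X - X^{q^{i+1}}) * L_i`. -/
lemma mz_L_succ (i : ℕ) :
    carlitzL Fq (i + 1) = ((X : Polynomial Fq) - X ^ qq ^ (i + 1)) * carlitzL Fq i := by
  unfold carlitzL
  rw [Finset.prod_Icc_succ_top (by omega), mul_comm]

lemma mz_D_zero : carlitzD Fq 0 = 1 := by simp [carlitzD]
lemma mz_L_zero : carlitzL Fq 0 = 1 := by simp [carlitzL]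

lemma mz_Xpow_sub_ne {a b : ℕ} (h : a < b) : ((X : Polynomial Fq) ^ b - X ^ a) ≠ 0 := by
  intro h0
  have h1 : ((X : Polynomial Fq) ^ b - X ^ a).coeff b = 1 := by
    rw [Polynomial.coeff_sub, Polynomial.coeff_X_pow, Polynomial.coeff_X_pow,
      if_pos rfl, if_neg (by omega)]
    ring
  rw [h0] at h1
  simp at h1

lemma mz_D_ne (i : ℕ) : carlitzD Fq i ≠ 0 := by
  unfold carlitzD
  refine Finset.prod_ne_zero_iff.2 fun j hj => ?_
  exact mz_Xpow_sub_ne (Nat.pow_lt_pow_right mz_one_lt_q (Finset.mem_range.mp hj))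

lemma mz_L_ne (i : ℕ) : carlitzL Fq i ≠ 0 := by
  unfold carlitzL
  refine Finset.prod_ne_zero_iff.2 fun j hj => ?_
  have hj1 : 1 ≤ j := (Finset.mem_Icc.mp hj).1
  have : ((X : Polynomial Fq) - X ^ qq ^ j) = -(X ^ qq ^ j - X ^ 1) := by ring
  rw [this, neg_ne_zero]
  exact mz_Xpow_sub_ne (by calc 1 < qq := mz_one_lt_q
                                _ ≤ qq ^ j := Nat.le_self_pow (by omega) _)

end AuxMZV

section AuxMZV2
set_option linter.unusedSectionVars false
variable {Fq : Type} [Field Fq] [Fintype Fq]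

local notation "qq" => Fintype.card Fq

/-- The set of polynomials of degree `< d`. -/
def mzV (Fq : Type) [Field Fq] [Fintype Fq] [DecidableEq Fq] : ℕ → Finset (Polynomial Fq)
  | 0 => {0}
  | d + 1 => ((Finset.univ : Finset Fq) ×ˢ mzV Fq d).image
      (fun z => Polynomial.C z.1 * X ^ d + z.2)

variable [DecidableEq Fq]

lemma mz_mem_mzV {d : ℕ} {a : Polynomial Fq} :
    a ∈ mzV Fq d ↔ a.degree < (d : ℕ) := by
  induction d generalizing a with
  | zero =>
    simp only [mzV, Finset.mem_singleton]
    rw [Nat.cast_zero, Nat.WithBot.lt_zero_iff, Polynomial.degree_eq_bot]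
  | succ d ih =>
    constructor
    · intro ha
      simp only [mzV, Finset.mem_image, Finset.mem_product] at ha
      obtain ⟨⟨c, v⟩, ⟨-, hv⟩, rfl⟩ := ha
      have h2 : v.degree < (d : WithBot ℕ) := ih.mp hv
      have hlt : (d : WithBot ℕ) < ((d + 1 : ℕ) : WithBot ℕ) := by
        exact_mod_cast (by omega : d < d + 1)
      have h1 : (Polynomial.C c * X ^ d).degree < ((d + 1 : ℕ) : WithBot ℕ) :=
        (Polynomial.degree_C_mul_X_pow_le d c).trans_lt hlt
      exact (Polynomial.degree_add_le _ _).trans_lt (max_lt h1 (h2.trans hlt))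
    · intro ha
      simp only [mzV, Finset.mem_image, Finset.mem_product]
      refine ⟨⟨a.coeff d, a - Polynomial.C (a.coeff d) * X ^ d⟩, ⟨Finset.mem_univ _, ?_⟩, by ring⟩
      rw [ih, Polynomial.degree_lt_iff_coeff_zero]
      intro m hm
      rw [Polynomial.coeff_sub, Polynomial.coeff_C_mul, Polynomial.coeff_X_pow]
      rcases eq_or_lt_of_le hm with rfl | hm'
      · simp
      · rw [if_neg (by omega), mul_zero, sub_zero]
        exact Polynomial.coeff_eq_zero_of_degree_lt
          (ha.trans_le (by exact_mod_cast (by omega : d + 1 ≤ m)))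

lemma mz_coeff_eq_zero_of_mem_mzV {d : ℕ} {a : Polynomial Fq} (ha : a ∈ mzV Fq d)
    {m : ℕ} (hm : d ≤ m) : a.coeff m = 0 :=
  Polynomial.coeff_eq_zero_of_degree_lt ((mz_mem_mzV.mp ha).trans_le (by exact_mod_cast hm))

lemma mz_mzV_injOn (d : ℕ) :
    ∀ x ∈ (Finset.univ : Finset Fq) ×ˢ mzV Fq d, ∀ y ∈ (Finset.univ : Finset Fq) ×ˢ mzV Fq d,
      (fun z : Fq × Polynomial Fq => Polynomial.C z.1 * X ^ d + z.2) x
        = (fun z : Fq × Polynomial Fq => Polynomial.C z.1 * X ^ d + z.2) y → x = y := by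
  rintro ⟨c, v⟩ hx ⟨c', v'⟩ hy h
  simp only [Finset.mem_product] at hx hy
  have hc : c = c' := by
    have := congrArg (fun p => Polynomial.coeff p d) h
    simpa [Polynomial.coeff_X_pow, mz_coeff_eq_zero_of_mem_mzV hx.2 le_rfl,
      mz_coeff_eq_zero_of_mem_mzV hy.2 le_rfl] using this
  subst hc
  have hv : v = v' := by
    have := congrArg (fun p => p - Polynomial.C c * X ^ d) h
    simpa using this
  simp [hv]

lemma mz_card_mzV (d : ℕ) : (mzV Fq d).card = qq ^ d := by
  induction d with
  | zero => simp [mzV]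
  | succ d ih =>
    rw [mzV, Finset.card_image_of_injOn (by
        intro x hx y hy h
        exact mz_mzV_injOn d x hx y hy h),
      Finset.card_product, Finset.card_univ, ih, pow_succ, mul_comm]

/-- The set of monic polynomials of degree `d`. -/
def mzMon (Fq : Type) [Field Fq] [Fintype Fq] [DecidableEq Fq] (d : ℕ) : Finset (Polynomial Fq) :=
  (mzV Fq d).image (fun a => X ^ d + a)

lemma mz_mem_mzMon {d : ℕ} {b : Polynomial Fq} :
    b ∈ mzMon Fq d ↔ b.Monic ∧ b.natDegree = d := by
  constructor
  · intro hb
    obtain ⟨a, ha, rfl⟩ := Finset.mem_image.mp hb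
    have hda : a.degree < ((X : Polynomial Fq) ^ d).degree := by
      rw [Polynomial.degree_X_pow]; exact mz_mem_mzV.mp ha
    constructor
    · exact (Polynomial.monic_X_pow d).add_of_left hda
    · rw [Polynomial.natDegree_eq_of_degree_eq (Polynomial.degree_add_eq_left_of_degree_lt hda),
        Polynomial.natDegree_X_pow]
  · rintro ⟨hmon, rfl⟩
    refine Finset.mem_image.mpr ⟨b - X ^ b.natDegree, ?_, by ring⟩
    rw [mz_mem_mzV, Polynomial.degree_lt_iff_coeff_zero]
    intro m hm
    rw [Polynomial.coeff_sub, Polynomial.coeff_X_pow]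
    rcases eq_or_lt_of_le hm with rfl | hm'
    · rw [if_pos rfl, Polynomial.Monic.coeff_natDegree hmon, sub_self]
    · rw [if_neg (by omega), sub_zero]
      exact Polynomial.coeff_eq_zero_of_natDegree_lt hm'

lemma mz_mzMon_prod {M : Type} [CommMonoid M] (d : ℕ) (f : Polynomial Fq → M) :
    ∏ b ∈ mzMon Fq d, f b = ∏ a ∈ mzV Fq d, f (X ^ d + a) := by
  rw [mzMon, Finset.prod_image]
  intro x hx y hy h
  have := congrArg (fun p => p - (X : Polynomial Fq) ^ d) h
  simpa using this

lemma mz_mzMon_sum {M : Type} [AddCommMonoid M] (d : ℕ) (f : Polynomial Fq → M) :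
    ∑ b ∈ mzMon Fq d, f b = ∑ a ∈ mzV Fq d, f (X ^ d + a) := by
  rw [mzMon, Finset.sum_image]
  intro x hx y hy h
  have := congrArg (fun p => p - (X : Polynomial Fq) ^ d) h
  simpa using this

lemma mz_card_mzMon (d : ℕ) : (mzMon Fq d).card = qq ^ d := by
  rw [mzMon, Finset.card_image_of_injOn, mz_card_mzV]
  intro x hx y hy h
  have := congrArg (fun p => p - (X : Polynomial Fq) ^ d) h
  simpa using this

lemma mz_mzMon_ne_zero {d : ℕ} {b : Polynomial Fq} (hb : b ∈ mzMon Fq d) : b ≠ 0 :=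
  (mz_mem_mzMon.mp hb).1.ne_zero

/-- Coefficients of the Carlitz polynomial `e_d`. -/
def mzc (Fq : Type) [Field Fq] [Fintype Fq] : ℕ → ℕ → Polynomial Fq
  | 0, j => if j = 0 then 1 else 0
  | d + 1, j =>
      (if j = 0 then 0 else mzc Fq d (j - 1) ^ Fintype.card Fq)
        - carlitzD Fq d ^ (Fintype.card Fq - 1) * mzc Fq d j

lemma mz_mzc_gt : ∀ d j : ℕ, d < j → mzc Fq d j = 0 := by
  intro d
  induction d with
  | zero => intro j hj; simp only [mzc]; rw [if_neg (by omega)]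
  | succ d ih =>
    intro j hj
    have hj0 : j ≠ 0 := by omega
    rw [mzc, if_neg hj0, ih (j - 1) (by omega), ih j (by omega)]
    simp [zero_pow (mz_q_ne_zero (Fq := Fq))]

lemma mz_qsub1_mul (x : Polynomial Fq) : x ^ (qq - 1) * x = x ^ qq := by
  rw [← pow_succ, Nat.sub_add_cancel (by have := mz_one_lt_q (Fq := Fq); omega)]

lemma mz_mzc_mul : ∀ d j : ℕ, j ≤ d →
    mzc Fq d j * (carlitzD Fq j * carlitzL Fq (d - j) ^ qq ^ j) = carlitzD Fq d := by
  intro d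
  induction d with
  | zero =>
    intro j hj
    interval_cases j
    simp [mzc, mz_D_zero, mz_L_zero]
  | succ d ih =>
    intro j hj
    rcases Nat.eq_or_lt_of_le hj with rfl | hjlt
    · -- j = d + 1 : top coefficient
      rw [mzc, if_neg (by omega), Nat.add_sub_cancel, mz_mzc_gt d (d + 1) (by omega), mul_zero,
        sub_zero, Nat.sub_self, mz_L_zero, one_pow, mul_one]
      have htop : mzc Fq d d = 1 := by
        have h := ih d le_rfl
        rw [Nat.sub_self, mz_L_zero, one_pow, mul_one] at h
        exact mul_right_cancel₀ (mz_D_ne (Fq := Fq) d) (h.trans (one_mul _).symm)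
      rw [htop, one_pow, one_mul]
    · have hjd : j ≤ d := by omega
      rcases Nat.eq_zero_or_pos j with rfl | hjpos
      · rw [mzc, if_pos rfl, zero_sub, mz_D_zero, one_mul, pow_zero, pow_one, neg_mul,
          Nat.sub_zero, mz_L_succ d]
        have h0 := ih 0 (Nat.zero_le d)
        rw [mz_D_zero, one_mul, pow_zero, pow_one, Nat.sub_zero] at h0
        rw [mz_D_succ d, ← mz_qsub1_mul]
        linear_combination (((X : Polynomial Fq) ^ qq ^ (d + 1) - X) *
          carlitzD Fq d ^ (qq - 1)) * h0
      · obtain ⟨j', rfl⟩ : ∃ j', j = j' + 1 := ⟨j - 1, by omega⟩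
        rw [mzc, if_neg (by omega), Nat.add_sub_cancel, sub_mul]
        have hsub : d + 1 - (j' + 1) = d - j' := by omega
        rw [hsub]
        have hXpow : ((X : Polynomial Fq) - X ^ qq ^ (d - j')) ^ qq ^ (j' + 1)
            = (X : Polynomial Fq) ^ qq ^ (j' + 1) - X ^ qq ^ (d + 1) := by
          rw [mz_sub_pow_q, ← pow_mul, ← pow_add]
          have h9 : d - j' + (j' + 1) = d + 1 := by omega
          rw [h9]
        have e1 : mzc Fq d j' ^ qq * (carlitzD Fq (j' + 1) * carlitzL Fq (d - j') ^ qq ^ (j' + 1))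
            = ((X : Polynomial Fq) ^ qq ^ (j' + 1) - X) * carlitzD Fq d ^ qq := by
          have h1 := congrArg (· ^ qq) (ih j' (by omega))
          simp only [mul_pow, ← pow_mul, ← pow_succ] at h1
          rw [mz_D_succ j']
          linear_combination ((X : Polynomial Fq) ^ qq ^ (j' + 1) - X) * h1
        have e2 : carlitzD Fq d ^ (qq - 1) * mzc Fq d (j' + 1) *
              (carlitzD Fq (j' + 1) * carlitzL Fq (d - j') ^ qq ^ (j' + 1))
            = ((X : Polynomial Fq) ^ qq ^ (j' + 1) - X ^ qq ^ (d + 1)) * carlitzD Fq d ^ qq := by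
          have h2 := ih (j' + 1) hjd
          have hsub2 : d - (j' + 1) = d - j' - 1 := by omega
          rw [hsub2] at h2
          have hLd : carlitzL Fq (d - j') = ((X : Polynomial Fq) - X ^ qq ^ (d - j')) *
              carlitzL Fq (d - j' - 1) := by
            have h8 : d - j' = (d - j' - 1) + 1 := by omega
            rw [h8, mz_L_succ, Nat.add_sub_cancel]
          have hLpow : carlitzL Fq (d - j') ^ qq ^ (j' + 1)
              = ((X : Polynomial Fq) ^ qq ^ (j' + 1) - X ^ qq ^ (d + 1)) *
                  carlitzL Fq (d - j' - 1) ^ qq ^ (j' + 1) := by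
            rw [hLd, mul_pow, hXpow]
          rw [hLpow]
          linear_combination (((X : Polynomial Fq) ^ qq ^ (j' + 1) - X ^ qq ^ (d + 1)) *
              carlitzD Fq d ^ (qq - 1)) * h2 +
            (((X : Polynomial Fq) ^ qq ^ (j' + 1) - X ^ qq ^ (d + 1))) *
              mz_qsub1_mul (Fq := Fq) (carlitzD Fq d)
        rw [e1, e2, mz_D_succ d]
        ring

lemma mz_mzc_top (d : ℕ) : mzc Fq d d = 1 := by
  have h := mz_mzc_mul (Fq := Fq) d d le_rfl
  rw [Nat.sub_self, mz_L_zero, one_pow, mul_one] at h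
  exact mul_right_cancel₀ (mz_D_ne (Fq := Fq) d) (h.trans (one_mul _).symm)

end AuxMZV2

section AuxMZV3
set_option linter.unusedSectionVars false
set_option maxHeartbeats 1000000
variable {Fq : Type} [Field Fq] [Fintype Fq]

local notation "qq" => Fintype.card Fq

lemma mz_pow_q1 {M : Type} [Monoid M] (x : M) : x ^ (qq - 1) * x = x ^ qq := by
  rw [← pow_succ, Nat.sub_add_cancel (by have := mz_one_lt_q (Fq := Fq); omega)]

/-- `mzh i d k` : complete homogeneous symmetric function of degree `k` in
`θ^{q^i}, …, θ^{q^{i+d}}`. -/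
def mzh (Fq : Type) [Field Fq] [Fintype Fq] : ℕ → ℕ → ℕ → Polynomial Fq
  | i, 0, k => X ^ (Fintype.card Fq ^ i * k)
  | _, _ + 1, 0 => 1
  | i, d + 1, k + 1 =>
      mzh Fq i d (k + 1) + X ^ Fintype.card Fq ^ (i + d + 1) * mzh Fq i (d + 1) k
  termination_by i d k => (d, k)

lemma mzh_base (i k : ℕ) : mzh Fq i 0 k = X ^ (qq ^ i * k) := by rw [mzh]
lemma mzh_succ_zero (i d : ℕ) : mzh Fq i (d + 1) 0 = 1 := by rw [mzh]
lemma mzh_succ_succ (i d k : ℕ) : mzh Fq i (d + 1) (k + 1)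
    = mzh Fq i d (k + 1) + X ^ qq ^ (i + d + 1) * mzh Fq i (d + 1) k := by rw [mzh]

lemma mzh_zero (i d : ℕ) : mzh Fq i d 0 = 1 := by
  cases d with
  | zero => simp [mzh_base]
  | succ d => exact mzh_succ_zero i d

lemma mzh_geom (i k : ℕ) :
    ((X : Polynomial Fq) ^ qq ^ i - X ^ qq ^ (i + 1)) * mzh Fq i 1 k
      = X ^ (qq ^ i * (k + 1)) - X ^ (qq ^ (i + 1) * (k + 1)) := by
  induction k with
  | zero => simp [mzh_zero]
  | succ k ih =>
    rw [mzh_succ_succ, mzh_base]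
    have e1 : i + 0 + 1 = i + 1 := by omega
    rw [e1]
    linear_combination (X : Polynomial Fq) ^ qq ^ (i + 1) * ih

lemma mzh_one (i d : ℕ) : mzh Fq i d 1 = ∑ j ∈ Finset.range (d + 1), X ^ qq ^ (i + j) := by
  induction d with
  | zero => simp [mzh_base]
  | succ d ih =>
    rw [mzh_succ_succ, mzh_zero, mul_one, ih,
      Finset.sum_range_succ (fun j => (X : Polynomial Fq) ^ qq ^ (i + j)) (d + 1),
      show i + (d + 1) = i + d + 1 from by omega]

lemma mzh_swap : ∀ k d i : ℕ, mzh Fq i (d + 1) (k + 1)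
    = mzh Fq (i + 1) d (k + 1) + X ^ qq ^ i * mzh Fq i (d + 1) k := by
  intro k
  induction k with
  | zero =>
    intro d i
    rw [mzh_zero, mul_one, mzh_one, mzh_one, Finset.sum_range_succ', Nat.add_zero]
    congr 1
    apply Finset.sum_congr rfl
    intro j _
    congr 2
    omega
  | succ k ihk =>
    intro d
    induction d with
    | zero =>
      intro i
      rw [mzh_succ_succ, mzh_base]
      have e1 : i + 0 + 1 = i + 1 := by omega
      rw [e1, mzh_base]
      have hg := mzh_geom (Fq := Fq) i (k + 1)
      linear_combination -hg
    | succ d ihd =>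
      intro i
      have h1 := mzh_succ_succ (Fq := Fq) i (d + 1) (k + 1)
      have h2 := ihd i
      have h3 := ihk (d + 1) i
      have h4 := mzh_succ_succ (Fq := Fq) (i + 1) d (k + 1)
      have h5 := mzh_succ_succ (Fq := Fq) i (d + 1) k
      have e1 : i + 1 + d + 1 = i + (d + 1) + 1 := by omega
      rw [e1] at h4
      linear_combination h1 + h2 + X ^ qq ^ (i + (d + 1) + 1) * h3 - h4 - X ^ qq ^ i * h5

lemma mzh_frob : ∀ d k i : ℕ, mzh Fq i d k ^ qq = mzh Fq (i + 1) d k := by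
  intro d
  induction d with
  | zero =>
    intro k i
    rw [mzh_base, mzh_base, ← pow_mul]
    congr 1
    rw [pow_succ]
    ring
  | succ d ihd =>
    intro k
    induction k with
    | zero => intro i; rw [mzh_zero, mzh_zero, one_pow]
    | succ k ihk =>
      intro i
      rw [mzh_succ_succ, mzh_succ_succ, mz_add_pow_q1, mul_pow, ihd, ihk, ← pow_mul]
      have e1 : qq ^ (i + d + 1) * qq = qq ^ (i + 1 + d + 1) := by
        rw [← pow_succ]
        congr 1
        omega
      rw [e1]

lemma mzh_key (d k : ℕ) : mzh Fq 0 d (k + 1) ^ qq - mzh Fq 0 d (k + 1)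
    = ((X : Polynomial Fq) ^ qq ^ (d + 1) - X) * mzh Fq 0 (d + 1) k := by
  rw [mzh_frob]
  have h1 := mzh_succ_succ (Fq := Fq) 0 d k
  have h2 := mzh_swap (Fq := Fq) k d 0
  rw [Nat.zero_add] at h1
  rw [pow_zero, pow_one] at h2
  linear_combination h1 - h2

/-- The explicit form `E_d = Σ_j c_{d,j} X^{q^j}` of the Carlitz polynomial. -/
def mzE (Fq : Type) [Field Fq] [Fintype Fq] (d : ℕ) : Polynomial (Polynomial Fq) :=
  ∑ j ∈ Finset.range (d + 1), Polynomial.C (mzc Fq d j) * X ^ Fintype.card Fq ^ j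

/-- The Carlitz polynomial `e_d = ∏_{deg a < d} (X - a)`. -/
def mze (Fq : Type) [Field Fq] [Fintype Fq] [DecidableEq Fq] (d : ℕ) : Polynomial (Polynomial Fq) :=
  ∏ a ∈ mzV Fq d, ((X : Polynomial (Polynomial Fq)) - Polynomial.C a)

lemma mz_prod_fq {R : Type} [CommRing R] [IsDomain R] [Algebra Fq R] (z w : R) :
    ∏ c : Fq, (z - algebraMap Fq R c * w) = z ^ qq - w ^ (qq - 1) * z := by
  rcases eq_or_ne w 0 with rfl | hw
  · have h1 : qq - 1 ≠ 0 := by have := mz_one_lt_q (Fq := Fq); omega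
    simp [zero_pow h1, Finset.prod_const, Finset.card_univ]
  · have hinj : Function.Injective (algebraMap R (FractionRing R)) :=
      IsFractionRing.injective R (FractionRing R)
    apply hinj
    simp only [map_prod, map_sub, map_pow, map_mul]
    set K := FractionRing R
    set ψ : Fq →+* K := (algebraMap R K).comp (algebraMap Fq R) with hψ
    set Z : K := algebraMap R K z with hZ
    set W : K := algebraMap R K w with hW
    have hW0 : W ≠ 0 := by
      rw [hW, map_ne_zero_iff _ hinj]
      exact hw
    set u : K := Z / W with hu
    have hZW : W * u = Z := by
      rw [hu]
      exact mul_div_cancel₀ _ hW0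
    have base : ∏ c : Fq, (u - ψ c) = u ^ qq - u := by
      have h0 := mz_prod_X_sub_C (Fq := Fq)
      have h1 := congrArg (Polynomial.eval₂RingHom ψ u) h0
      rw [map_prod, map_sub, map_pow] at h1
      simpa using h1
    calc ∏ c : Fq, (Z - (algebraMap R K) ((algebraMap Fq R) c) * W)
        = ∏ c : Fq, (W * (u - ψ c)) := by
          apply Finset.prod_congr rfl
          intro c _
          rw [mul_sub, hZW, hψ]
          simp [mul_comm]
      _ = W ^ qq * ∏ c : Fq, (u - ψ c) := by
          rw [Finset.prod_mul_distrib, Finset.prod_const, Finset.card_univ]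
      _ = W ^ qq * (u ^ qq - u) := by rw [base]
      _ = Z ^ qq - W ^ (qq - 1) * Z := by
          rw [mul_sub, ← mul_pow, hZW]
          congr 1
          rw [← hZW, ← mz_pow_q1 (Fq := Fq) W]
          ring

variable [DecidableEq Fq]

lemma mz_comp_prod (d : ℕ) (z : Polynomial Fq) :
    ∏ a ∈ mzV Fq d, ((X : Polynomial (Polynomial Fq)) - Polynomial.C (z + a))
      = Polynomial.eval₂ Polynomial.C ((X : Polynomial (Polynomial Fq)) - Polynomial.C z)
          (mze Fq d) := by
  rw [mze, ← Polynomial.coe_eval₂RingHom, map_prod]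
  apply Finset.prod_congr rfl
  intro a _
  rw [map_sub, Polynomial.coe_eval₂RingHom, Polynomial.eval₂_X, Polynomial.eval₂_C, map_add]
  ring

lemma mz_comp_E (d : ℕ) (z : Polynomial Fq) :
    Polynomial.eval₂ Polynomial.C ((X : Polynomial (Polynomial Fq)) - Polynomial.C z)
        (mzE Fq d)
      = mzE Fq d - Polynomial.C (Polynomial.eval z (mzE Fq d)) := by
  rw [mzE, ← Polynomial.coe_eval₂RingHom, map_sum]
  have h1 : ∀ j : ℕ,
      (Polynomial.eval₂RingHom (Polynomial.C (R := Polynomial Fq))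
          ((X : Polynomial (Polynomial Fq)) - Polynomial.C z))
          (Polynomial.C (mzc Fq d j) * X ^ qq ^ j)
        = Polynomial.C (mzc Fq d j) * X ^ qq ^ j
            - Polynomial.C (mzc Fq d j * z ^ qq ^ j) := by
    intro j
    rw [map_mul, map_pow, Polynomial.coe_eval₂RingHom, Polynomial.eval₂_X, Polynomial.eval₂_C,
      mz_sub_pow_q (Fq := Fq) j (X : Polynomial (Polynomial Fq)) (Polynomial.C z), ← map_pow,
      map_mul]
    ring
  rw [Finset.sum_congr rfl fun j _ => h1 j, Finset.sum_sub_distrib, ← map_sum]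
  congr 2
  rw [Polynomial.eval_finset_sum]
  apply Finset.sum_congr rfl
  intro j _
  rw [Polynomial.eval_mul, Polynomial.eval_C, Polynomial.eval_pow, Polynomial.eval_X]

lemma mz_main_e (d : ℕ) :
    mze Fq d = mzE Fq d ∧
      ∀ k, Polynomial.eval ((X : Polynomial Fq) ^ (d + k)) (mze Fq d)
        = carlitzD Fq d * mzh Fq 0 d k := by
  induction d with
  | zero =>
    have h0 : mze Fq 0 = X := by
      rw [mze, show mzV Fq 0 = {0} from rfl, Finset.prod_singleton, map_zero, sub_zero]
    constructor
    · rw [h0, mzE]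
      simp [mzc]
    · intro k
      rw [h0, mz_D_zero, mzh_base, Polynomial.eval_X]
      simp
  | succ d ih =>
    obtain ⟨hEe, heval⟩ := ih
    have hDd : Polynomial.eval ((X : Polynomial Fq) ^ d) (mzE Fq d) = carlitzD Fq d := by
      have h := heval 0
      rw [hEe] at h
      rw [Nat.add_zero] at h
      rw [h, mzh_zero, mul_one]
    have hevalc : ∀ c : Fq, Polynomial.eval (Polynomial.C c * X ^ d) (mzE Fq d)
        = Polynomial.C c * carlitzD Fq d := by
      intro c
      have hL : Polynomial.eval (Polynomial.C c * X ^ d) (mzE Fq d)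
          = ∑ j ∈ Finset.range (d + 1),
              Polynomial.C c * (mzc Fq d j * ((X : Polynomial Fq) ^ d) ^ qq ^ j) := by
        rw [mzE, Polynomial.eval_finset_sum]
        apply Finset.sum_congr rfl
        intro j _
        rw [Polynomial.eval_mul, Polynomial.eval_C, Polynomial.eval_pow, Polynomial.eval_X,
          mul_pow, ← map_pow, mz_fq_pow_q]
        ring
      have hR : carlitzD Fq d = ∑ j ∈ Finset.range (d + 1),
          mzc Fq d j * ((X : Polynomial Fq) ^ d) ^ qq ^ j := by
        rw [← hDd, mzE, Polynomial.eval_finset_sum]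
        apply Finset.sum_congr rfl
        intro j _
        rw [Polynomial.eval_mul, Polynomial.eval_C, Polynomial.eval_pow, Polynomial.eval_X]
      rw [hL, hR, Finset.mul_sum]
    have hrec : mze Fq (d + 1)
        = mze Fq d ^ qq - Polynomial.C (carlitzD Fq d ^ (qq - 1)) * mze Fq d := by
      have h1 : mze Fq (d + 1) = ∏ z ∈ (Finset.univ : Finset Fq) ×ˢ mzV Fq d,
          ((X : Polynomial (Polynomial Fq)) - Polynomial.C (Polynomial.C z.1 * X ^ d + z.2)) := by
        rw [mze, show mzV Fq (d + 1) = ((Finset.univ : Finset Fq) ×ˢ mzV Fq d).image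
          (fun z => Polynomial.C z.1 * X ^ d + z.2) from rfl, Finset.prod_image]
        intro x hx y hy h
        exact mz_mzV_injOn d x hx y hy h
      have h2 : ∀ c : Fq, ∏ a ∈ mzV Fq d,
          ((X : Polynomial (Polynomial Fq)) - Polynomial.C (Polynomial.C c * X ^ d + a))
            = mzE Fq d - algebraMap Fq (Polynomial (Polynomial Fq)) c
                * Polynomial.C (carlitzD Fq d) := by
        intro c
        rw [mz_comp_prod d (Polynomial.C c * X ^ d), hEe, mz_comp_E, hevalc, map_mul]
        rfl
      rw [h1, Finset.prod_product]
      calc (∏ c : Fq, ∏ a ∈ mzV Fq d, ((X : Polynomial (Polynomial Fq))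
            - Polynomial.C (Polynomial.C c * X ^ d + a)))
          = ∏ c : Fq, (mzE Fq d - algebraMap Fq (Polynomial (Polynomial Fq)) c
              * Polynomial.C (carlitzD Fq d)) := Finset.prod_congr rfl fun c _ => h2 c
        _ = mzE Fq d ^ qq - Polynomial.C (carlitzD Fq d) ^ (qq - 1) * mzE Fq d :=
            mz_prod_fq _ _
        _ = mze Fq d ^ qq - Polynomial.C (carlitzD Fq d ^ (qq - 1)) * mze Fq d := by
            rw [map_pow, hEe]
    have hEstep : mzE Fq (d + 1)
        = mzE Fq d ^ qq - Polynomial.C (carlitzD Fq d ^ (qq - 1)) * mzE Fq d := by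
      have hq : (mzE Fq d) ^ qq = ∑ j ∈ Finset.range (d + 1),
          Polynomial.C (mzc Fq d j ^ qq) * X ^ qq ^ (j + 1) := by
        rw [mzE]
        have hs := mz_sum_pow_q (Fq := Fq) (R := Polynomial (Polynomial Fq))
          (Finset.range (d + 1)) (fun j => Polynomial.C (mzc Fq d j) * X ^ qq ^ j) 1
        rw [pow_one] at hs
        rw [hs]
        apply Finset.sum_congr rfl
        intro j _
        rw [mul_pow, ← map_pow, ← pow_mul, ← pow_succ]
      rw [mzE]
      have hsplit : ∀ j ∈ Finset.range (d + 2),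
          Polynomial.C (mzc Fq (d + 1) j) * (X : Polynomial (Polynomial Fq)) ^ qq ^ j
            = Polynomial.C (if j = 0 then 0 else mzc Fq d (j - 1) ^ qq) * X ^ qq ^ j
              - Polynomial.C (carlitzD Fq d ^ (qq - 1))
                  * (Polynomial.C (mzc Fq d j) * X ^ qq ^ j) := by
        intro j _
        rw [show mzc Fq (d + 1) j = (if j = 0 then 0 else mzc Fq d (j - 1) ^ qq)
          - carlitzD Fq d ^ (qq - 1) * mzc Fq d j from by rw [mzc], map_sub, sub_mul, map_mul]
        ring
      rw [Finset.sum_congr rfl hsplit, Finset.sum_sub_distrib]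
      congr 1
      · rw [Finset.sum_range_succ', hq]
        simp
      · rw [← Finset.mul_sum, Finset.sum_range_succ, mz_mzc_gt d (d + 1) (by omega), map_zero,
          zero_mul, add_zero, mzE]
    refine ⟨by rw [hrec, hEstep, hEe], ?_⟩
    intro k
    rw [hrec]
    rw [Polynomial.eval_sub, Polynomial.eval_pow, Polynomial.eval_mul, Polynomial.eval_C]
    rw [show d + 1 + k = d + (k + 1) from by omega, heval (k + 1)]
    rw [mul_pow, mz_D_succ d]
    linear_combination carlitzD Fq d ^ qq * mzh_key (Fq := Fq) d k
      - mzh Fq 0 d (k + 1) * mz_pow_q1 (Fq := Fq) (carlitzD Fq d)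

lemma mz_eval_E_D (d : ℕ) :
    Polynomial.eval ((X : Polynomial Fq) ^ d) (mzE Fq d) = carlitzD Fq d := by
  have h := (mz_main_e (Fq := Fq) d).2 0
  rw [(mz_main_e (Fq := Fq) d).1] at h
  rw [Nat.add_zero] at h
  rw [h, mzh_zero, mul_one]

lemma mz_prodMon (d : ℕ) :
    ∏ b ∈ mzMon Fq d, ((X : Polynomial (Polynomial Fq)) - Polynomial.C b)
      = mzE Fq d - Polynomial.C (carlitzD Fq d) := by
  rw [mz_mzMon_prod, mz_comp_prod d (X ^ d), (mz_main_e (Fq := Fq) d).1, mz_comp_E, mz_eval_E_D]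

lemma mz_root {d : ℕ} {b : Polynomial Fq} (hb : b ∈ mzMon Fq d) :
    Polynomial.eval b (mzE Fq d) = carlitzD Fq d := by
  have h := congrArg (Polynomial.eval b) (mz_prodMon (Fq := Fq) d)
  rw [Polynomial.eval_prod, Polynomial.eval_sub, Polynomial.eval_C,
    Finset.prod_eq_zero hb (by rw [Polynomial.eval_sub, Polynomial.eval_X, Polynomial.eval_C,
      sub_self])] at h
  have h2 := h.symm
  rw [sub_eq_zero] at h2
  exact h2

lemma mz_root_sum {d : ℕ} {b : Polynomial Fq} (hb : b ∈ mzMon Fq d) :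
    ∑ j ∈ Finset.range (d + 1), mzc Fq d j * b ^ qq ^ j = carlitzD Fq d := by
  have h := mz_root (Fq := Fq) hb
  rw [mzE, Polynomial.eval_finset_sum] at h
  rw [← h]
  apply Finset.sum_congr rfl
  intro j _
  rw [Polynomial.eval_mul, Polynomial.eval_C, Polynomial.eval_pow, Polynomial.eval_X]

end AuxMZV3

section AuxMZV4
set_option linter.unusedSectionVars false
set_option maxHeartbeats 1000000
variable {Fq : Type} [Field Fq] [Fintype Fq]

local notation "qq" => Fintype.card Fq

lemma mz_Xpow_sub_ne' {R : Type} [CommRing R] [Nontrivial R] {a b : ℕ} (h : a < b) :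
    ((X : Polynomial R) ^ b - X ^ a) ≠ 0 := by
  intro h0
  have h1 : ((X : Polynomial R) ^ b - X ^ a).coeff b = 1 := by
    rw [Polynomial.coeff_sub, Polynomial.coeff_X_pow, Polynomial.coeff_X_pow,
      if_pos rfl, if_neg (by omega)]
    ring
  rw [h0] at h1
  simp at h1

variable {P : Polynomial Fq}

lemma mz_deg_pos (hPm : P.Monic) (hPirr : Irreducible P) : 0 < P.natDegree := by
  rcases Nat.eq_zero_or_pos P.natDegree with h0 | h
  · exact absurd (hPm.natDegree_eq_zero.mp h0 ▸ isUnit_one) hPirr.not_isUnit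
  · exact h

lemma mz_card_adjoin (hPirr : Irreducible P) :
    ∀ _ : Fintype (AdjoinRoot P), True := fun _ => trivial

lemma mz_frob_fix_all (hPirr : Irreducible P) {m : ℕ} (hm1 : 1 ≤ m) (hmD : m < P.natDegree)
    (hx : (Ideal.Quotient.mk (Ideal.span {P}) (X : Polynomial Fq)) ^ qq ^ m
      = Ideal.Quotient.mk (Ideal.span {P}) (X : Polynomial Fq)) : False := by
  haveI : Fact (Irreducible P) := ⟨hPirr⟩
  letI instF : Fintype (AdjoinRoot P) :=
    Module.fintypeOfFintype (AdjoinRoot.powerBasis hPirr.ne_zero).basis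
  have hcard : Fintype.card (AdjoinRoot P) = qq ^ P.natDegree := by
    have h := Module.card_fintype (AdjoinRoot.powerBasis hPirr.ne_zero).basis
    simpa using h
  obtain ⟨p, f, hp, hc, hf0, hcardq⟩ := mz_exists_char (Fq := Fq)
  haveI := hc; haveI : Fact p.Prime := ⟨hp⟩
  haveI : CharP (AdjoinRoot P) p :=
    charP_of_injective_algebraMap (algebraMap Fq (AdjoinRoot P)).injective p
  haveI : ExpChar (AdjoinRoot P) p := .prime hp
  set ψ := iterateFrobenius (AdjoinRoot P) p (f * m) with hψ
  have hψx : ∀ y : AdjoinRoot P, ψ y = y ^ qq ^ m := by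
    intro y
    rw [hψ, iterateFrobenius_def, hcardq, ← pow_mul]
  have hext : ψ.comp (AdjoinRoot.mk P) = AdjoinRoot.mk P := by
    apply Polynomial.ringHom_ext
    · intro c
      rw [RingHom.comp_apply, hψx, ← map_pow]
      congr 1
      have : (Polynomial.C c : Polynomial Fq) ^ qq ^ m = Polynomial.C (c ^ qq ^ m) := by
        rw [map_pow]
      rw [this, mz_fq_pow_q]
    · rw [RingHom.comp_apply, hψx]
      exact hx
  have hfix : ∀ y : AdjoinRoot P, y ^ qq ^ m = y := by
    intro y
    obtain ⟨a, rfl⟩ := AdjoinRoot.mk_surjective y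
    have h := RingHom.congr_fun hext a
    rw [RingHom.comp_apply, hψx] at h
    exact h
  classical
  have hg0 : ((X : Polynomial (AdjoinRoot P)) ^ qq ^ m - X) ≠ 0 := by
    have hg1 : ((X : Polynomial (AdjoinRoot P)) ^ qq ^ m - X ^ 1) ≠ 0 :=
      mz_Xpow_sub_ne' (R := AdjoinRoot P) (by
        calc 1 < qq := mz_one_lt_q (Fq := Fq)
          _ ≤ qq ^ m := Nat.le_self_pow (by omega) _)
    rw [pow_one] at hg1
    exact hg1
  have hsub : (Finset.univ : Finset (AdjoinRoot P))
      ⊆ ((X : Polynomial (AdjoinRoot P)) ^ qq ^ m - X).roots.toFinset := by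
    intro y _
    rw [Multiset.mem_toFinset, Polynomial.mem_roots hg0]
    simp only [Polynomial.IsRoot, Polynomial.eval_sub, Polynomial.eval_pow, Polynomial.eval_X]
    rw [hfix y, sub_self]
  have hle : Fintype.card (AdjoinRoot P) ≤ qq ^ m := by
    calc Fintype.card (AdjoinRoot P) = (Finset.univ : Finset (AdjoinRoot P)).card := rfl
      _ ≤ ((X : Polynomial (AdjoinRoot P)) ^ qq ^ m - X).roots.toFinset.card :=
          Finset.card_le_card hsub
      _ ≤ Multiset.card ((X : Polynomial (AdjoinRoot P)) ^ qq ^ m - X).roots :=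
          Multiset.toFinset_card_le _
      _ ≤ ((X : Polynomial (AdjoinRoot P)) ^ qq ^ m - X).natDegree := Polynomial.card_roots' _
      _ ≤ qq ^ m := by
          refine (Polynomial.natDegree_sub_le _ _).trans ?_
          simp only [Polynomial.natDegree_X_pow, Polynomial.natDegree_X, max_le_iff]
          exact ⟨le_rfl, Nat.one_le_pow _ _ (by have := mz_one_lt_q (Fq := Fq); omega)⟩
  rw [hcard] at hle
  exact absurd (Nat.pow_lt_pow_right mz_one_lt_q hmD) (not_lt.mpr hle)

lemma mz_pow_card_fix (hPirr : Irreducible P)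
    (y : Polynomial Fq ⧸ Ideal.span {P}) : y ^ qq ^ P.natDegree = y := by
  haveI : Fact (Irreducible P) := ⟨hPirr⟩
  letI instF : Fintype (AdjoinRoot P) :=
    Module.fintypeOfFintype (AdjoinRoot.powerBasis hPirr.ne_zero).basis
  have hcard : Fintype.card (AdjoinRoot P) = qq ^ P.natDegree := by
    have h := Module.card_fintype (AdjoinRoot.powerBasis hPirr.ne_zero).basis
    simpa using h
  have h := FiniteField.pow_card (K := AdjoinRoot P) y
  rw [hcard] at h
  exact h

lemma mz_pi_theta_sub_ne (hPm : P.Monic) (hPirr : Irreducible P) {m : ℕ}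
    (hm1 : 1 ≤ m) (hmD : m < P.natDegree) :
    Ideal.Quotient.mk (Ideal.span {P}) ((X : Polynomial Fq) ^ qq ^ m - X) ≠ 0 := by
  intro h0
  rw [map_sub, map_pow, sub_eq_zero] at h0
  exact mz_frob_fix_all hPirr hm1 hmD h0

lemma mz_factor_eq {i j : ℕ} (hj : j < i) :
    (X : Polynomial Fq) ^ qq ^ i - X ^ qq ^ j
      = ((X : Polynomial Fq) ^ qq ^ (i - j) - X) ^ qq ^ j := by
  rw [mz_sub_pow_q (Fq := Fq) j, ← pow_mul, ← pow_add]
  have h1 : i - j + j = i := by omega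
  rw [h1]

lemma mz_pi_D_zero (hPirr : Irreducible P) {i : ℕ} (hi : P.natDegree ≤ i)
    (hD : 0 < P.natDegree) :
    Ideal.Quotient.mk (Ideal.span {P}) (carlitzD Fq i) = 0 := by
  rw [carlitzD, map_prod]
  apply Finset.prod_eq_zero (Finset.mem_range.mpr (show i - P.natDegree < i by omega))
  rw [mz_factor_eq (by omega), map_pow, map_sub, map_pow]
  have h2 : i - (i - P.natDegree) = P.natDegree := by omega
  rw [h2]
  rw [show (Ideal.Quotient.mk (Ideal.span {P}) (X : Polynomial Fq)) ^ qq ^ P.natDegree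
    = Ideal.Quotient.mk (Ideal.span {P}) (X : Polynomial Fq) from
      mz_pow_card_fix hPirr _]
  rw [sub_self, zero_pow (mz_qpow_ne_zero (Fq := Fq) _)]

lemma mz_P_dvd_D (hPirr : Irreducible P) (hPm : P.Monic) {i : ℕ} (hi : P.natDegree ≤ i) :
    P ∣ carlitzD Fq i := by
  rw [← Ideal.mem_span_singleton, ← Ideal.Quotient.eq_zero_iff_mem]
  exact mz_pi_D_zero hPirr hi (mz_deg_pos hPm hPirr)

lemma mz_pi_D_ne (hPm : P.Monic) (hPirr : Irreducible P) {i : ℕ} (hi : i < P.natDegree) :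
    Ideal.Quotient.mk (Ideal.span {P}) (carlitzD Fq i) ≠ 0 := by
  haveI hmax : (Ideal.span {P}).IsMaximal := PrincipalIdealRing.isMaximal_of_irreducible hPirr
  letI : Field (Polynomial Fq ⧸ Ideal.span {P}) := Ideal.Quotient.field _
  rw [carlitzD, map_prod]
  apply Finset.prod_ne_zero_iff.mpr
  intro j hj
  rw [Finset.mem_range] at hj
  rw [mz_factor_eq hj, map_pow]
  apply pow_ne_zero
  exact mz_pi_theta_sub_ne hPm hPirr (m := i - j) (by omega) (by omega)

lemma mz_pi_L_ne (hPm : P.Monic) (hPirr : Irreducible P) {i : ℕ} (hi : i < P.natDegree) :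
    Ideal.Quotient.mk (Ideal.span {P}) (carlitzL Fq i) ≠ 0 := by
  haveI hmax : (Ideal.span {P}).IsMaximal := PrincipalIdealRing.isMaximal_of_irreducible hPirr
  letI : Field (Polynomial Fq ⧸ Ideal.span {P}) := Ideal.Quotient.field _
  rw [carlitzL, map_prod]
  apply Finset.prod_ne_zero_iff.mpr
  intro j hj
  rw [Finset.mem_Icc] at hj
  have h1 : (X : Polynomial Fq) - X ^ qq ^ j = -((X : Polynomial Fq) ^ qq ^ j - X ^ 1) := by ring
  rw [h1, map_neg, neg_ne_zero, show ((X : Polynomial Fq) ^ 1) = X from pow_one _]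
  exact mz_pi_theta_sub_ne hPm hPirr (m := j) (by omega) (by omega)

lemma mz_pi_b_ne [DecidableEq Fq] (hPm : P.Monic) (hPirr : Irreducible P) {d : ℕ}
    (hd : d < P.natDegree) {b : Polynomial Fq} (hb : b ∈ mzMon Fq d) :
    Ideal.Quotient.mk (Ideal.span {P}) b ≠ 0 := by
  intro h0
  rw [Ideal.Quotient.eq_zero_iff_mem, Ideal.mem_span_singleton] at h0
  obtain ⟨hmon, hdeg⟩ := mz_mem_mzMon.mp hb
  have := Polynomial.natDegree_le_of_dvd h0 hmon.ne_zero
  omega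

lemma mz_pi_Gamma_ne (hPm : P.Monic) (hPirr : Irreducible P) {n : ℕ}
    (hn : n < qq ^ P.natDegree) :
    Ideal.Quotient.mk (Ideal.span {P}) (carlitzΓ Fq (n + 1)) ≠ 0 := by
  haveI hmax : (Ideal.span {P}).IsMaximal := PrincipalIdealRing.isMaximal_of_irreducible hPirr
  letI : Field (Polynomial Fq ⧸ Ideal.span {P}) := Ideal.Quotient.field _
  rw [carlitzΓ, map_prod]
  apply Finset.prod_ne_zero_iff.mpr
  intro i _
  rw [Nat.add_sub_cancel, map_pow]
  rcases Nat.eq_zero_or_pos (n / qq ^ i % qq) with h0 | hpos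
  · rw [h0, pow_zero]
    exact one_ne_zero
  · apply pow_ne_zero
    have hqi : qq ^ i ≤ n := by
      by_contra hlt
      rw [Nat.div_eq_of_lt (by omega)] at hpos
      simp at hpos
    have hiD : i < P.natDegree := by
      have := hqi.trans_lt hn
      by_contra hge
      have hle : qq ^ P.natDegree ≤ qq ^ i :=
        Nat.pow_le_pow_right (by have := mz_one_lt_q (Fq := Fq); omega) (by omega)
      omega
    exact mz_pi_D_ne hPm hPirr hiD

lemma mz_s_lt (hPm : P.Monic) (hPirr : Irreducible P) {s : ℕ} (hs : 1 ≤ s)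
    (h : ¬ P ∣ carlitzΓ Fq s) : s - 1 < qq ^ P.natDegree := by
  by_contra hge
  apply h
  set n := s - 1 with hn
  have hn0 : n ≠ 0 := by
    have h1 : 1 ≤ qq ^ P.natDegree :=
      Nat.one_le_pow _ _ (by have := mz_one_lt_q (Fq := Fq); omega)
    omega
  set i := Nat.log qq n with hi
  have hiD : P.natDegree ≤ i := by
    rw [hi]
    exact (Nat.le_log_iff_pow_le (mz_one_lt_q (Fq := Fq)) hn0).mpr (by omega)
  have h1 : qq ^ i ≤ n := Nat.pow_log_le_self qq hn0
  have h2 : n < qq ^ (i + 1) := Nat.lt_pow_succ_log_self (mz_one_lt_q (Fq := Fq)) n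
  have hdig : n / qq ^ i % qq = n / qq ^ i := by
    apply Nat.mod_eq_of_lt
    rw [Nat.div_lt_iff_lt_mul (pow_pos (by have := mz_one_lt_q (Fq := Fq); omega) i)]
    calc n < qq ^ (i + 1) := h2
      _ = qq * qq ^ i := by rw [pow_succ]; ring
  have hdigpos : 0 < n / qq ^ i % qq := by
    rw [hdig]
    exact Nat.div_pos h1 (pow_pos (by have := mz_one_lt_q (Fq := Fq); omega) i)
  have his : i ∈ Finset.range s := by
    rw [Finset.mem_range]
    have := Nat.lt_pow_self (n := i) (mz_one_lt_q (Fq := Fq))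
    omega
  calc P ∣ carlitzD Fq i ^ (n / qq ^ i % qq) :=
        dvd_pow (mz_P_dvd_D hPirr hPm hiD) (by omega)
    _ ∣ carlitzΓ Fq s := by
        rw [carlitzΓ, ← hn]
        exact Finset.dvd_prod_of_mem _ his

end AuxMZV4

section AuxMZV5
set_option linter.unusedSectionVars false
set_option maxHeartbeats 1600000
variable {Fq : Type} [Field Fq] [Fintype Fq]

local notation "qq" => Fintype.card Fq

variable {P : Polynomial Fq}

lemma mz_coeff_mzE_zero {d k : ℕ} (hk0 : k ≠ 0) (hk : ∀ j, j ≤ d → k ≠ qq ^ j) :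
    (mzE Fq d - Polynomial.C (carlitzD Fq d)).coeff k = 0 := by
  rw [Polynomial.coeff_sub, mzE, Polynomial.finset_sum_coeff, Polynomial.coeff_C, if_neg hk0,
    sub_zero]
  apply Finset.sum_eq_zero
  intro j hj
  rw [Polynomial.coeff_C_mul, Polynomial.coeff_X_pow, if_neg, mul_zero]
  intro h
  exact hk j (by have := Finset.mem_range.mp hj; omega) h

variable [DecidableEq Fq]

lemma mz_psum_vanish (hPm : P.Monic) (hPirr : Irreducible P) {d : ℕ} (hd1 : 1 ≤ d) :
    ∀ m : ℕ, m + 2 ≤ qq ^ d →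
      ∑ b ∈ mzMon Fq d, (Ideal.Quotient.mk (Ideal.span {P}) b) ^ m = 0 := by
  haveI hmax : (Ideal.span {P}).IsMaximal := PrincipalIdealRing.isMaximal_of_irreducible hPirr
  letI : Field (Polynomial Fq ⧸ Ideal.span {P}) := Ideal.Quotient.field _
  obtain ⟨p, f, hp, hc, hf0, hcardq⟩ := mz_exists_char (Fq := Fq)
  haveI := hc; haveI : Fact p.Prime := ⟨hp⟩
  haveI hch : CharP (Polynomial Fq ⧸ Ideal.span {P}) p :=
    charP_of_injective_algebraMap
      (algebraMap Fq (Polynomial Fq ⧸ Ideal.span {P})).injective p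
  set π := Ideal.Quotient.mk (Ideal.span {P}) with hπ
  set β : {x // x ∈ mzMon Fq d} → (Polynomial Fq ⧸ Ideal.span {P}) := fun x => π x.1 with hβ
  set Φ := MvPolynomial.aeval (R := Polynomial Fq ⧸ Ideal.span {P}) β with hΦ
  set N := qq ^ d with hN
  have hNcast : ((N : ℕ) : Polynomial Fq ⧸ Ideal.span {P}) = 0 := by
    rw [CharP.cast_eq_zero_iff _ p, hN, hcardq, ← pow_mul]
    exact dvd_pow_self p (by positivity)
  have hpsum : ∀ k, Φ (MvPolynomial.psum {x // x ∈ mzMon Fq d}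
      (Polynomial Fq ⧸ Ideal.span {P}) k) = ∑ b ∈ mzMon Fq d, (π b) ^ k := by
    intro k
    rw [hΦ, MvPolynomial.psum, map_sum,
      ← Finset.sum_attach (mzMon Fq d) (fun b => (π b) ^ k), Finset.univ_eq_attach]
    apply Finset.sum_congr rfl
    intro x _
    rw [map_pow, MvPolynomial.aeval_X]
  have hms : Multiset.map β (Finset.univ (α := {x // x ∈ mzMon Fq d})).val
      = Multiset.map π (mzMon Fq d).val := by
    rw [Finset.univ_eq_attach]
    calc Multiset.map β ((mzMon Fq d).attach.val)
        = Multiset.map π (Multiset.map Subtype.val ((mzMon Fq d).val.attach)) := by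
          rw [Multiset.map_map]
          rfl
      _ = Multiset.map π (mzMon Fq d).val := by rw [Multiset.attach_map_val]
  have hesymm : ∀ k, Φ (MvPolynomial.esymm {x // x ∈ mzMon Fq d}
      (Polynomial Fq ⧸ Ideal.span {P}) k) = ((mzMon Fq d).val.map π).esymm k := by
    intro k
    rw [hΦ, MvPolynomial.aeval_esymm_eq_multiset_esymm, hms]
  have hcardms : Multiset.card ((mzMon Fq d).val.map π) = N := by
    rw [Multiset.card_map]
    exact mz_card_mzMon d
  have hprod : (((mzMon Fq d).val.map π).map
        (fun r => (Polynomial.X : Polynomial (Polynomial Fq ⧸ Ideal.span {P})) - Polynomial.C r)).prod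
      = Polynomial.map π (mzE Fq d - Polynomial.C (carlitzD Fq d)) := by
    have h0 : Polynomial.map π (mzE Fq d - Polynomial.C (carlitzD Fq d))
        = Polynomial.map π (∏ b ∈ mzMon Fq d,
            ((Polynomial.X : Polynomial (Polynomial Fq)) - Polynomial.C b)) := by
      rw [mz_prodMon]
    rw [h0, ← Polynomial.coe_mapRingHom, map_prod, Finset.prod_eq_multiset_prod,
      Multiset.map_map]
    apply congrArg Multiset.prod
    apply Multiset.map_congr rfl
    intro b _
    simp only [Function.comp_apply, Polynomial.coe_mapRingHom, Polynomial.map_sub,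
      Polynomial.map_X, Polynomial.map_C]
  have hesymm0 : ∀ i, 0 < i → i < N → (∀ j, j ≤ d → i + qq ^ j ≠ N) →
      ((mzMon Fq d).val.map π).esymm i = 0 := by
    intro i hi0 hiN hij
    have h1 := Multiset.prod_X_sub_C_coeff ((mzMon Fq d).val.map π)
      (k := N - i) (by rw [hcardms]; omega)
    rw [hcardms, hprod] at h1
    have h2 : N - (N - i) = i := by omega
    rw [h2] at h1
    have h3 : (Polynomial.map π (mzE Fq d - Polynomial.C (carlitzD Fq d))).coeff (N - i) = 0 := by
      rw [Polynomial.coeff_map, mz_coeff_mzE_zero (by omega), map_zero]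
      intro j hj h
      apply hij j hj
      have : qq ^ j ≤ N := Nat.pow_le_pow_right (by have := mz_one_lt_q (Fq := Fq); omega) hj
      omega
    rw [h3] at h1
    have h4 := h1.symm
    rcases mul_eq_zero.mp h4 with h5 | h5
    · exact absurd h5 (pow_ne_zero _ (by norm_num))
    · exact h5
  intro m
  induction m using Nat.strong_induction_on with
  | _ m IH =>
    intro hm
    rcases Nat.eq_zero_or_pos m with rfl | hm0
    · simp only [pow_zero]
      rw [Finset.sum_const, mz_card_mzMon, nsmul_eq_mul, mul_one]
      exact hNcast
    · have hnewton := congrArg Φ (MvPolynomial.psum_eq_mul_esymm_sub_sum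
        {x // x ∈ mzMon Fq d} (Polynomial Fq ⧸ Ideal.span {P}) m hm0)
      rw [map_sub, map_mul, map_mul, map_pow, map_neg, map_one, map_natCast, map_sum,
        hpsum] at hnewton
      have hterm1 : ((m : ℕ) : Polynomial Fq ⧸ Ideal.span {P})
          * Φ (MvPolynomial.esymm _ _ m) = 0 := by
        by_cases hsp : ∃ j, j ≤ d ∧ m + qq ^ j = N
        · obtain ⟨j, hjd, hjm⟩ := hsp
          have hj1 : 1 ≤ j := by
            by_contra hj0
            have : j = 0 := by omega
            rw [this, pow_zero] at hjm
            omega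
          have hdvd : p ∣ m := by
            have h1 : p ∣ N := by
              rw [hN, hcardq, ← pow_mul]
              exact dvd_pow_self p (by positivity)
            have h2 : p ∣ qq ^ j := by
              rw [hcardq, ← pow_mul]
              exact dvd_pow_self p (by positivity)
            have h3 : m = N - qq ^ j := by omega
            rw [h3]
            exact Nat.dvd_sub h1 h2
          rw [(CharP.cast_eq_zero_iff _ p _).mpr hdvd, zero_mul]
        · push_neg at hsp
          rw [hesymm, hesymm0 m hm0 (by omega) (fun j hj => hsp j hj), mul_zero]
      have hterm2 : ∀ a ∈ Finset.filter (fun a : ℕ × ℕ => a.1 ∈ Set.Ioo 0 m)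
          (Finset.HasAntidiagonal.antidiagonal m),
          Φ ((-1) ^ a.1 * MvPolynomial.esymm _ _ a.1 * MvPolynomial.psum _ _ a.2) = 0 := by
        intro a ha
        rw [Finset.mem_filter, Finset.HasAntidiagonal.mem_antidiagonal] at ha
        obtain ⟨hsum, hIoo⟩ := ha
        obtain ⟨h01, h1m⟩ := hIoo
        rw [map_mul, map_mul]
        by_cases hsp : ∃ j, j ≤ d ∧ a.1 + qq ^ j = N
        · obtain ⟨j, hjd, hjm⟩ := hsp
          have hq2 : 2 ≤ qq ^ j := by
            have h9 : a.1 + 2 ≤ N := by omega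
            omega
          have ha2 : a.2 + 2 ≤ qq ^ j := by omega
          have hja : a.2 + 2 ≤ qq ^ d := by
            calc a.2 + 2 ≤ qq ^ j := ha2
              _ ≤ qq ^ d := Nat.pow_le_pow_right (by have := mz_one_lt_q (Fq := Fq); omega) hjd
          rw [hpsum, IH a.2 (by omega) hja, mul_zero]
        · push_neg at hsp
          rw [hesymm, hesymm0 a.1 h01 (by omega) (fun j hj => hsp j hj), mul_zero, zero_mul]
      rw [Finset.sum_eq_zero hterm2, mul_assoc, hterm1] at hnewton
      simpa using hnewton

end AuxMZV5

section AuxMZV6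
set_option linter.unusedSectionVars false
set_option maxHeartbeats 1600000
variable {Fq : Type} [Field Fq] [Fintype Fq]

local notation "qq" => Fintype.card Fq

variable {P : Polynomial Fq} [DecidableEq Fq]

lemma mz_S_base (hPm : P.Monic) (hPirr : Irreducible P) {d : ℕ} (hd : d < P.natDegree) :
    Ideal.Quotient.mk (Ideal.span {P}) (carlitzL Fq d)
      * ∑ b ∈ mzMon Fq d, Ring.inverse (Ideal.Quotient.mk (Ideal.span {P}) b) = 1 := by
  haveI hmax : (Ideal.span {P}).IsMaximal := PrincipalIdealRing.isMaximal_of_irreducible hPirr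
  letI : Field (Polynomial Fq ⧸ Ideal.span {P}) := Ideal.Quotient.field _
  obtain ⟨p, f, hp, hc, hf0, hcardq⟩ := mz_exists_char (Fq := Fq)
  haveI := hc; haveI : Fact p.Prime := ⟨hp⟩
  haveI hch : CharP (Polynomial Fq ⧸ Ideal.span {P}) p :=
    charP_of_injective_algebraMap (algebraMap Fq (Polynomial Fq ⧸ Ideal.span {P})).injective p
  simp only [Ring.inverse_eq_inv]
  set π := Ideal.Quotient.mk (Ideal.span {P}) with hπdef
  have hb0 : ∀ b ∈ mzMon Fq d, π b ≠ 0 := fun b hb => mz_pi_b_ne hPm hPirr hd hb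
  set g : Polynomial (Polynomial Fq ⧸ Ideal.span {P}) :=
    ∏ b ∈ mzMon Fq d, (Polynomial.X - Polynomial.C (π b)) with hgdef
  have hfact : g = Polynomial.map π (mzE Fq d) - Polynomial.C (π (carlitzD Fq d)) := by
    rw [hgdef]
    have h1 : ∀ b ∈ mzMon Fq d, (Polynomial.X - Polynomial.C (π b))
        = Polynomial.map π ((Polynomial.X : Polynomial (Polynomial Fq)) - Polynomial.C b) := by
      intro b _
      rw [Polynomial.map_sub, Polynomial.map_X, Polynomial.map_C]
    rw [Finset.prod_congr rfl h1, ← Polynomial.coe_mapRingHom, ← map_prod, mz_prodMon,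
      Polynomial.coe_mapRingHom, Polynomial.map_sub, Polynomial.map_C]
  have hqcast : ∀ j : ℕ, 1 ≤ j → ((qq ^ j : ℕ) : Polynomial Fq ⧸ Ideal.span {P}) = 0 := by
    intro j hj
    rw [CharP.cast_eq_zero_iff _ p, hcardq, ← pow_mul]
    exact dvd_pow_self p (by positivity)
  have hmapE : Polynomial.map π (mzE Fq d)
      = ∑ j ∈ Finset.range (d + 1), Polynomial.C (π (mzc Fq d j)) * Polynomial.X ^ qq ^ j := by
    rw [mzE, ← Polynomial.coe_mapRingHom, map_sum]
    apply Finset.sum_congr rfl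
    intro j _
    rw [Polynomial.coe_mapRingHom, Polynomial.map_mul, Polynomial.map_C, Polynomial.map_pow,
      Polynomial.map_X]
  have hder : Polynomial.derivative g = Polynomial.C (π (mzc Fq d 0)) := by
    rw [hfact, Polynomial.derivative_sub, Polynomial.derivative_C, sub_zero, hmapE,
      Polynomial.derivative_sum]
    rw [Finset.sum_eq_single 0]
    · rw [pow_zero, pow_one, Polynomial.derivative_C_mul, Polynomial.derivative_X, mul_one]
    · intro j _ hj0
      rw [Polynomial.derivative_C_mul, Polynomial.derivative_X_pow, hqcast j (by omega), map_zero,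
        zero_mul, mul_zero]
    · intro h0
      exact absurd (Finset.mem_range.mpr (by omega)) h0
  have hder2 : Polynomial.derivative g = ∑ b ∈ mzMon Fq d,
      ∏ b' ∈ (mzMon Fq d).erase b, (Polynomial.X - Polynomial.C (π b')) := by
    rw [hgdef, Finset.prod_eq_multiset_prod, Polynomial.derivative_prod,
      Finset.sum_eq_multiset_sum]
    apply congrArg Multiset.sum
    apply Multiset.map_congr rfl
    intro b hb
    rw [Polynomial.derivative_sub, Polynomial.derivative_X, Polynomial.derivative_C, sub_zero,
      mul_one, ← Finset.erase_val, ← Finset.prod_eq_multiset_prod]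
  have heval0 : Polynomial.eval 0 g = - π (carlitzD Fq d) := by
    rw [hfact, Polynomial.eval_sub, Polynomial.eval_C, hmapE, Polynomial.eval_finset_sum,
      Finset.sum_eq_zero, zero_sub]
    intro j _
    rw [Polynomial.eval_mul, Polynomial.eval_pow, Polynomial.eval_X,
      zero_pow (mz_qpow_ne_zero (Fq := Fq) j), mul_zero]
  have hprod0 : ∀ b ∈ mzMon Fq d, ∏ b' ∈ (mzMon Fq d).erase b, ((0 : Polynomial Fq ⧸ Ideal.span {P}) - π b')
      = π (carlitzD Fq d) * (π b)⁻¹ := by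
    intro b hb
    have h1 : ((0 : Polynomial Fq ⧸ Ideal.span {P}) - π b)
        * ∏ b' ∈ (mzMon Fq d).erase b, ((0 : Polynomial Fq ⧸ Ideal.span {P}) - π b')
        = Polynomial.eval 0 g := by
      rw [hgdef, Polynomial.eval_prod]
      have h2 : ∏ b' ∈ mzMon Fq d, Polynomial.eval 0 (Polynomial.X - Polynomial.C (π b'))
          = ∏ b' ∈ mzMon Fq d, ((0 : Polynomial Fq ⧸ Ideal.span {P}) - π b') := by
        apply Finset.prod_congr rfl
        intro b' _
        rw [Polynomial.eval_sub, Polynomial.eval_X, Polynomial.eval_C]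
      rw [h2]
      exact Finset.mul_prod_erase (mzMon Fq d)
        (fun b' => (0 : Polynomial Fq ⧸ Ideal.span {P}) - π b') hb
    rw [heval0] at h1
    have hb' := hb0 b hb
    have h3 : ∏ b' ∈ (mzMon Fq d).erase b, ((0 : Polynomial Fq ⧸ Ideal.span {P}) - π b')
        = (- π (carlitzD Fq d)) / ((0 : Polynomial Fq ⧸ Ideal.span {P}) - π b) := by
      rw [eq_div_iff (by rw [zero_sub, neg_ne_zero]; exact hb')]
      rw [mul_comm]
      exact h1
    rw [h3, zero_sub, neg_div_neg_eq, div_eq_mul_inv]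
  have hkey : π (mzc Fq d 0) = π (carlitzD Fq d) * ∑ b ∈ mzMon Fq d, (π b)⁻¹ := by
    have h2 : Polynomial.eval 0 (Polynomial.derivative g) = π (mzc Fq d 0) := by
      rw [hder, Polynomial.eval_C]
    have h3 : Polynomial.eval 0 (Polynomial.derivative g)
        = ∑ b ∈ mzMon Fq d, π (carlitzD Fq d) * (π b)⁻¹ := by
      rw [hder2, Polynomial.eval_finset_sum]
      apply Finset.sum_congr rfl
      intro b hb
      rw [Polynomial.eval_prod, ← hprod0 b hb]
      apply Finset.prod_congr rfl
      intro b' _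
      rw [Polynomial.eval_sub, Polynomial.eval_X, Polynomial.eval_C]
    rw [← h2, h3, ← Finset.mul_sum]
  have hc0 : π (mzc Fq d 0) * π (carlitzL Fq d) = π (carlitzD Fq d) := by
    have h := mz_mzc_mul (Fq := Fq) d 0 (Nat.zero_le d)
    rw [mz_D_zero, one_mul, pow_zero, pow_one, Nat.sub_zero] at h
    rw [← map_mul, h]
  have hD0 : π (carlitzD Fq d) ≠ 0 := mz_pi_D_ne hPm hPirr hd
  apply mul_left_cancel₀ hD0
  rw [mul_one]
  calc π (carlitzD Fq d) * (π (carlitzL Fq d) * ∑ b ∈ mzMon Fq d, (π b)⁻¹)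
      = π (carlitzL Fq d) * (π (carlitzD Fq d) * ∑ b ∈ mzMon Fq d, (π b)⁻¹) := by ring
    _ = π (carlitzL Fq d) * π (mzc Fq d 0) := by rw [← hkey]
    _ = π (carlitzD Fq d) := by rw [mul_comm, hc0]

lemma mz_S_rec (hPm : P.Monic) (hPirr : Irreducible P) {d : ℕ} (hd : d < P.natDegree)
    {s : ℕ} (hs : 2 ≤ s) :
    Ideal.Quotient.mk (Ideal.span {P}) (carlitzD Fq d)
        * ∑ b ∈ mzMon Fq d, Ring.inverse (Ideal.Quotient.mk (Ideal.span {P}) b) ^ s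
      = ∑ j ∈ (Finset.range (d + 1)).filter (fun j => qq ^ j < s),
          Ideal.Quotient.mk (Ideal.span {P}) (mzc Fq d j)
            * ∑ b ∈ mzMon Fq d, Ring.inverse (Ideal.Quotient.mk (Ideal.span {P}) b) ^ (s - qq ^ j) := by
  haveI hmax : (Ideal.span {P}).IsMaximal := PrincipalIdealRing.isMaximal_of_irreducible hPirr
  letI : Field (Polynomial Fq ⧸ Ideal.span {P}) := Ideal.Quotient.field _
  simp only [Ring.inverse_eq_inv]
  set π := Ideal.Quotient.mk (Ideal.span {P}) with hπdef
  have hb0 : ∀ b ∈ mzMon Fq d, π b ≠ 0 := fun b hb => mz_pi_b_ne hPm hPirr hd hb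
  have hcancel : ∀ x : Polynomial Fq ⧸ Ideal.span {P}, x ≠ 0 → ∀ a, a ≤ s →
      x ^ a * (x⁻¹) ^ s = (x⁻¹) ^ (s - a) := by
    intro x hx a ha
    have h1 : (x⁻¹) ^ s = (x⁻¹) ^ a * (x⁻¹) ^ (s - a) := by
      rw [← pow_add]
      congr 1
      omega
    rw [h1, ← mul_assoc, ← mul_pow, mul_inv_cancel₀ hx, one_pow, one_mul]
  have hcancel2 : ∀ x : Polynomial Fq ⧸ Ideal.span {P}, x ≠ 0 → ∀ a, s ≤ a →
      x ^ a * (x⁻¹) ^ s = x ^ (a - s) := by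
    intro x hx a ha
    have h1 : x ^ a = x ^ (a - s) * x ^ s := by
      rw [← pow_add]
      congr 1
      omega
    rw [h1, mul_assoc, ← mul_pow, mul_inv_cancel₀ hx, one_pow, mul_one]
  have hroot : ∀ b ∈ mzMon Fq d,
      ∑ j ∈ Finset.range (d + 1), π (mzc Fq d j) * (π b) ^ qq ^ j = π (carlitzD Fq d) := by
    intro b hb
    have h := congrArg π (mz_root_sum (Fq := Fq) hb)
    rw [map_sum] at h
    rw [← h]
    apply Finset.sum_congr rfl
    intro j _
    rw [map_mul, map_pow]
  calc π (carlitzD Fq d) * ∑ b ∈ mzMon Fq d, ((π b)⁻¹) ^ s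
      = ∑ b ∈ mzMon Fq d, (∑ j ∈ Finset.range (d + 1), π (mzc Fq d j) * (π b) ^ qq ^ j)
          * ((π b)⁻¹) ^ s := by
        rw [Finset.mul_sum]
        apply Finset.sum_congr rfl
        intro b hb
        rw [hroot b hb]
    _ = ∑ b ∈ mzMon Fq d, ∑ j ∈ Finset.range (d + 1),
          π (mzc Fq d j) * ((π b) ^ qq ^ j * ((π b)⁻¹) ^ s) := by
        apply Finset.sum_congr rfl
        intro b _
        rw [Finset.sum_mul]
        apply Finset.sum_congr rfl
        intro j _
        ring
    _ = ∑ j ∈ Finset.range (d + 1), π (mzc Fq d j)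
          * ∑ b ∈ mzMon Fq d, (π b) ^ qq ^ j * ((π b)⁻¹) ^ s := by
        rw [Finset.sum_comm]
        apply Finset.sum_congr rfl
        intro j _
        rw [Finset.mul_sum]
    _ = ∑ j ∈ (Finset.range (d + 1)).filter (fun j => qq ^ j < s),
          π (mzc Fq d j) * ∑ b ∈ mzMon Fq d, ((π b)⁻¹) ^ (s - qq ^ j) := by
        rw [← Finset.sum_filter_add_sum_filter_not (Finset.range (d + 1))
          (fun j => qq ^ j < s)]
        have hA : ∀ j ∈ (Finset.range (d + 1)).filter (fun j => qq ^ j < s),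
            π (mzc Fq d j) * ∑ b ∈ mzMon Fq d, (π b) ^ qq ^ j * ((π b)⁻¹) ^ s
              = π (mzc Fq d j) * ∑ b ∈ mzMon Fq d, ((π b)⁻¹) ^ (s - qq ^ j) := by
          intro j hj
          rw [Finset.mem_filter] at hj
          congr 1
          apply Finset.sum_congr rfl
          intro b hb
          exact hcancel (π b) (hb0 b hb) (qq ^ j) (by omega)
        have hB : ∀ j ∈ (Finset.range (d + 1)).filter (fun j => ¬ qq ^ j < s),
            π (mzc Fq d j) * ∑ b ∈ mzMon Fq d, (π b) ^ qq ^ j * ((π b)⁻¹) ^ s = 0 := by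
          intro j hj
          rw [Finset.mem_filter, Finset.mem_range] at hj
          obtain ⟨hjd, hjs⟩ := hj
          push_neg at hjs
          have hj1 : 1 ≤ j := by
            by_contra hj0
            have : j = 0 := by omega
            rw [this, pow_zero] at hjs
            omega
          have hd1 : 1 ≤ d := by omega
          have hsum0 : ∑ b ∈ mzMon Fq d, (π b) ^ qq ^ j * ((π b)⁻¹) ^ s = 0 := by
            have h1 : ∑ b ∈ mzMon Fq d, (π b) ^ qq ^ j * ((π b)⁻¹) ^ s
                = ∑ b ∈ mzMon Fq d, (π b) ^ (qq ^ j - s) := by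
              apply Finset.sum_congr rfl
              intro b hb
              exact hcancel2 (π b) (hb0 b hb) (qq ^ j) hjs
            rw [h1]
            apply mz_psum_vanish hPm hPirr hd1
            have hqd : qq ^ j ≤ qq ^ d :=
              Nat.pow_le_pow_right (by have := mz_one_lt_q (Fq := Fq); omega) (by omega)
            omega
          rw [hsum0, mul_zero]
        rw [Finset.sum_congr rfl hA, Finset.sum_congr rfl hB, Finset.sum_const_zero, add_zero]

end AuxMZV6

section AuxMZV7
set_option linter.unusedSectionVars false
set_option maxHeartbeats 1600000
variable {Fq : Type} [Field Fq] [Fintype Fq]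

local notation "qq" => Fintype.card Fq

/-- `G_{d,i} = ∏_{m=1}^{i} (θ^{q^i} - θ^{q^{d+m}}) ∈ A`. -/
def mzG (Fq : Type) [Field Fq] [Fintype Fq] (d i : ℕ) : Polynomial Fq :=
  ∏ m ∈ Finset.Icc 1 i, ((X : Polynomial Fq) ^ Fintype.card Fq ^ i
    - X ^ Fintype.card Fq ^ (d + m))

lemma mz_G_gt {d i : ℕ} (h : d < i) : mzG Fq d i = 0 := by
  rw [mzG]
  apply Finset.prod_eq_zero (i := i - d) (Finset.mem_Icc.mpr ⟨by omega, by omega⟩)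
  rw [show d + (i - d) = i from by omega, sub_self]

lemma mz_G_mul {d i : ℕ} (h : i ≤ d) :
    mzG Fq d i * carlitzL Fq (d - i) ^ qq ^ i = carlitzL Fq d ^ qq ^ i := by
  have hfac : ∀ m ∈ Finset.Icc 1 i, ((X : Polynomial Fq) ^ qq ^ i - X ^ qq ^ (d + m))
      = ((X : Polynomial Fq) - X ^ qq ^ (d - i + m)) ^ qq ^ i := by
    intro m hm
    rw [mz_sub_pow_q (Fq := Fq) i, ← pow_mul, ← pow_add,
      show d - i + m + i = d + m from by omega]
  rw [mzG, Finset.prod_congr rfl hfac, Finset.prod_pow]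
  have hre : ∏ m ∈ Finset.Icc 1 i, ((X : Polynomial Fq) - X ^ qq ^ (d - i + m))
      = ∏ m ∈ Finset.Icc (d - i + 1) d, ((X : Polynomial Fq) - X ^ qq ^ m) := by
    have himg : Finset.Icc (d - i + 1) d = (Finset.Icc 1 i).image (fun m => m + (d - i)) := by
      rw [Finset.image_add_right_Icc]
      congr 1 <;> omega
    rw [himg, Finset.prod_image (by intro x _ y _ hxy; simp only at hxy; omega)]
    apply Finset.prod_congr rfl
    intro m _
    rw [show m + (d - i) = d - i + m from by omega]
  rw [hre, ← mul_pow]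
  congr 1
  have e1 : ∀ n : ℕ, Finset.Icc 1 n = Finset.Ioc 0 n := fun n => by
    rw [← Finset.Icc_add_one_left_eq_Ioc, zero_add]
  have e2 : Finset.Icc (d - i + 1) d = Finset.Ioc (d - i) d := by
    rw [← Finset.Icc_add_one_left_eq_Ioc]
  rw [carlitzL, carlitzL, e1 d, e1 (d - i), e2, mul_comm]
  exact Finset.prod_Ioc_consecutive _ (by omega) (by omega)

lemma mz_Gamma_ne (m : ℕ) : carlitzΓ Fq m ≠ 0 := by
  rw [carlitzΓ]
  apply Finset.prod_ne_zero_iff.mpr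
  intro i _
  exact pow_ne_zero _ (mz_D_ne i)

/-- retraction showing `toSt` is injective -/
lemma mz_ev1_toSt (a : Polynomial Fq) :
    (MvPolynomial.eval₂Hom (Polynomial.C : Fq →+* Polynomial Fq)
      (fun v : Fin 2 => if v = 1 then (X : Polynomial Fq) else 0)) (toSt Fq a) = a := by
  have h1 : toSt Fq a = Polynomial.eval₂ MvPolynomial.C (tS Fq) a := rfl
  rw [h1, Polynomial.hom_eval₂]
  have h2 : (MvPolynomial.eval₂Hom (Polynomial.C : Fq →+* Polynomial Fq)
      (fun v : Fin 2 => if v = 1 then (X : Polynomial Fq) else 0)).comp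
        (MvPolynomial.C : Fq →+* MvPolynomial (Fin 2) Fq) = Polynomial.C := by
    ext c
    simp
  have h3 : (MvPolynomial.eval₂Hom (Polynomial.C : Fq →+* Polynomial Fq)
      (fun v : Fin 2 => if v = 1 then (X : Polynomial Fq) else 0)) (tS Fq) = X := by
    rw [tS]
    simp
  rw [h2, h3, Polynomial.eval₂_C_X]

lemma mz_toSt_ne {a : Polynomial Fq} (ha : a ≠ 0) : toSt Fq a ≠ 0 := by
  intro h0
  apply ha
  have := congrArg (MvPolynomial.eval₂Hom (Polynomial.C : Fq →+* Polynomial Fq)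
    (fun v : Fin 2 => if v = 1 then (X : Polynomial Fq) else 0)) h0
  rw [mz_ev1_toSt, map_zero] at this
  exact this

variable {P : Polynomial Fq}

/-- The substitution `θ ↦ θ̄^{q^d}`, `t ↦ θ̄` into `A/(P)`. -/
def mzψ (P : Polynomial Fq) (d : ℕ) :
    MvPolynomial (Fin 2) Fq →+* Polynomial Fq ⧸ Ideal.span {P} :=
  MvPolynomial.eval₂Hom ((Ideal.Quotient.mk (Ideal.span {P})).comp Polynomial.C)
    (fun v : Fin 2 => if v = 0 then (Ideal.Quotient.mk (Ideal.span {P}) X) ^ qq ^ d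
      else Ideal.Quotient.mk (Ideal.span {P}) X)

lemma mzψ_C (d : ℕ) (c : Fq) :
    mzψ P d (MvPolynomial.C c) = Ideal.Quotient.mk (Ideal.span {P}) (Polynomial.C c) := by
  simp [mzψ]

lemma mzψ_tS (d : ℕ) : mzψ P d (tS Fq) = Ideal.Quotient.mk (Ideal.span {P}) X := by
  rw [tS]
  simp [mzψ]

lemma mzψ_θS (d : ℕ) :
    mzψ P d (θS Fq) = (Ideal.Quotient.mk (Ideal.span {P}) X) ^ qq ^ d := by
  rw [θS]
  simp [mzψ]

lemma mzψ_toSt (d : ℕ) (a : Polynomial Fq) :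
    mzψ P d (toSt Fq a) = Ideal.Quotient.mk (Ideal.span {P}) a := by
  have h1 : toSt Fq a = Polynomial.eval₂ MvPolynomial.C (tS Fq) a := rfl
  rw [h1, Polynomial.hom_eval₂]
  have h2 : (mzψ P d).comp (MvPolynomial.C : Fq →+* MvPolynomial (Fin 2) Fq)
      = (Ideal.Quotient.mk (Ideal.span {P})).comp (Polynomial.C : Fq →+* Polynomial Fq) := by
    ext c
    simp [mzψ]
  rw [h2, mzψ_tS, ← Polynomial.hom_eval₂, Polynomial.eval₂_C_X]

lemma mz_pow_hom (hPirr : Irreducible P) (m : ℕ) (a : Polynomial Fq) :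
    Polynomial.eval₂ ((Ideal.Quotient.mk (Ideal.span {P})).comp Polynomial.C)
        ((Ideal.Quotient.mk (Ideal.span {P}) X) ^ qq ^ m) a
      = (Ideal.Quotient.mk (Ideal.span {P}) a) ^ qq ^ m := by
  haveI hmax : (Ideal.span {P}).IsMaximal := PrincipalIdealRing.isMaximal_of_irreducible hPirr
  letI : Field (Polynomial Fq ⧸ Ideal.span {P}) := Ideal.Quotient.field _
  obtain ⟨p, f, hp, hc, hf0, hcardq⟩ := mz_exists_char (Fq := Fq)
  haveI := hc; haveI : Fact p.Prime := ⟨hp⟩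
  haveI hch : CharP (Polynomial Fq ⧸ Ideal.span {P}) p :=
    charP_of_injective_algebraMap (algebraMap Fq (Polynomial Fq ⧸ Ideal.span {P})).injective p
  haveI : ExpChar (Polynomial Fq ⧸ Ideal.span {P}) p := .prime hp
  set ψ2 := iterateFrobenius (Polynomial Fq ⧸ Ideal.span {P}) p (f * m) with hψ2def
  have hψ2 : ∀ y, ψ2 y = y ^ qq ^ m := by
    intro y
    rw [hψ2def, iterateFrobenius_def, hcardq, ← pow_mul]
  have hext : Polynomial.eval₂RingHom ((Ideal.Quotient.mk (Ideal.span {P})).comp Polynomial.C)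
      ((Ideal.Quotient.mk (Ideal.span {P}) X) ^ qq ^ m)
      = ψ2.comp (Ideal.Quotient.mk (Ideal.span {P})) := by
    apply Polynomial.ringHom_ext
    · intro c
      simp only [Polynomial.coe_eval₂RingHom, Polynomial.eval₂_C, RingHom.coe_comp,
        Function.comp_apply]
      rw [hψ2, ← map_pow, ← map_pow, mz_fq_pow_q]
    · simp only [Polynomial.coe_eval₂RingHom, Polynomial.eval₂_X, RingHom.coe_comp,
        Function.comp_apply]
      rw [hψ2]
  have h := RingHom.congr_fun hext a
  simp only [Polynomial.coe_eval₂RingHom, RingHom.coe_comp, Function.comp_apply] at h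
  rw [h, hψ2]

lemma mzψ_toSθ (hPirr : Irreducible P) (d : ℕ) (a : Polynomial Fq) :
    mzψ P d (toSθ Fq a) = (Ideal.Quotient.mk (Ideal.span {P}) a) ^ qq ^ d := by
  have h1 : toSθ Fq a = Polynomial.eval₂ MvPolynomial.C (θS Fq) a := rfl
  rw [h1, Polynomial.hom_eval₂]
  have h2 : (mzψ P d).comp (MvPolynomial.C : Fq →+* MvPolynomial (Fin 2) Fq)
      = (Ideal.Quotient.mk (Ideal.span {P})).comp (Polynomial.C : Fq →+* Polynomial Fq) := by
    ext c
    simp [mzψ]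
  rw [h2, mzψ_θS, mz_pow_hom hPirr]

lemma mzψ_ATG (hPirr : Irreducible P) (d i : ℕ) :
    mzψ P d (ATG Fq i) = Ideal.Quotient.mk (Ideal.span {P}) (mzG Fq d i) := by
  rw [ATG, mzG, map_prod, map_prod]
  apply Finset.prod_congr rfl
  intro m hm
  rw [map_sub, map_pow, map_pow, map_sub, map_pow, map_pow, mzψ_tS, mzψ_θS, ← pow_mul, ← pow_add]

lemma mzψ_toS₂ (hPirr : Irreducible P) (d : ℕ) (h : Polynomial (Polynomial Fq)) :
    mzψ P d (toS₂ Fq h) = Ideal.Quotient.mk (Ideal.span {P}) (twistEval Fq h d) := by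
  have h1 : toS₂ Fq h = Polynomial.eval₂ (toSθ Fq) (tS Fq) h := rfl
  rw [h1, Polynomial.hom_eval₂, mzψ_tS, Polynomial.eval₂_eq_sum_range, twistEval, map_sum]
  apply Finset.sum_congr rfl
  intro k _
  rw [RingHom.comp_apply, mzψ_toSθ hPirr, map_mul, map_pow, map_pow]

end AuxMZV7

section AuxMZV7b
set_option linter.unusedSectionVars false
set_option maxHeartbeats 1600000
variable {Fq : Type} [Field Fq] [Fintype Fq]

local notation "qq" => Fintype.card Fq

/-- coefficients of the series `Σ G_i/D_i x^{q^i}`. -/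
noncomputable def mzfc (Fq : Type) [Field Fq] [Fintype Fq] (N : ℕ) : FractionRing (ATRing Fq) :=
  ∑ i ∈ Finset.range (N + 1), if (Fintype.card Fq) ^ i = N then
    ιF Fq (ATG Fq i) / ιF Fq (toSt Fq (carlitzD Fq i)) else 0

/-- coefficients of the series `Σ H_n/Γ_{n+1} x^n`. -/
noncomputable def mzg (Fq : Type) [Field Fq] [Fintype Fq]
    (H : ℕ → Polynomial (Polynomial Fq)) (n : ℕ) : FractionRing (ATRing Fq) :=
  ιF Fq (toS₂ Fq (H n)) / ιF Fq (toSt Fq (carlitzΓ Fq (n + 1)))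

lemma mz_g_eq (H : ℕ → Polynomial (Polynomial Fq)) (hH : IsATFamily Fq H) :
    toS₂ Fq (H 0) = toSt Fq (carlitzΓ Fq 1) ∧
    ∀ n, 1 ≤ n → mzg Fq H n
      = ∑ i ∈ (Finset.range (n + 1)).filter (fun i => qq ^ i ≤ n),
          (ιF Fq (ATG Fq i) / ιF Fq (toSt Fq (carlitzD Fq i))) * mzg Fq H (n - qq ^ i) := by
  classical
  have hH' : (1 - PowerSeries.mk (mzfc Fq)) * PowerSeries.mk (mzg Fq H) = 1 := hH
  have hinj : Function.Injective (ιF Fq) := IsFractionRing.injective (ATRing Fq) _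
  have hne : ∀ x : ATRing Fq, x ≠ 0 → ιF Fq x ≠ 0 := by
    intro x hx h0
    exact hx (hinj (by rw [h0, map_zero]))
  have hΓne : ∀ m, ιF Fq (toSt Fq (carlitzΓ Fq m)) ≠ 0 :=
    fun m => hne _ (mz_toSt_ne (mz_Gamma_ne m))
  have hcoeff : ∀ n : ℕ, mzg Fq H n - ∑ uv ∈ Finset.HasAntidiagonal.antidiagonal n, mzfc Fq uv.1 * mzg Fq H uv.2
      = (if n = 0 then (1 : FractionRing (ATRing Fq)) else 0) := by
    intro n
    have h1 := congrArg (PowerSeries.coeff (R := FractionRing (ATRing Fq)) n) hH'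
    rw [sub_mul, one_mul, map_sub, PowerSeries.coeff_mul, PowerSeries.coeff_one] at h1
    simp only [PowerSeries.coeff_mk] at h1
    exact h1
  constructor
  · have h0 := hcoeff 0
    rw [if_pos rfl, Finset.Nat.antidiagonal_zero, Finset.sum_singleton] at h0
    have hfc0 : mzfc Fq 0 = 0 := by
      unfold mzfc
      rw [Finset.sum_range_one, if_neg]
      · intro h
        have : (0:ℕ) < qq ^ 0 := by positivity
        omega
    rw [hfc0, zero_mul, sub_zero] at h0
    have h2 : ιF Fq (toS₂ Fq (H 0)) = ιF Fq (toSt Fq (carlitzΓ Fq 1)) := by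
      have h3 := h0
      unfold mzg at h3
      rw [div_eq_one_iff_eq (hΓne 1)] at h3
      exact h3
    exact hinj h2
  · intro n hn
    have h0 := hcoeff n
    rw [if_neg (by omega)] at h0
    have hgn : mzg Fq H n = ∑ uv ∈ Finset.HasAntidiagonal.antidiagonal n, mzfc Fq uv.1 * mzg Fq H uv.2 := by
      have := sub_eq_zero.mp h0
      exact this
    rw [hgn, Finset.Nat.sum_antidiagonal_eq_sum_range_succ_mk]
    have h3 : ∀ u ∈ Finset.range (n + 1), mzfc Fq u * mzg Fq H (n - u)
        = ∑ i ∈ Finset.range (n + 1), (if qq ^ i = u then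
            (ιF Fq (ATG Fq i) / ιF Fq (toSt Fq (carlitzD Fq i))) * mzg Fq H (n - u) else 0) := by
      intro u hu
      rw [Finset.mem_range] at hu
      unfold mzfc
      rw [Finset.sum_mul, ← Finset.sum_subset
        (Finset.range_subset_range.mpr (show u + 1 ≤ n + 1 by omega))]
      · apply Finset.sum_congr rfl
        intro i _
        split_ifs with h
        · rfl
        · rw [zero_mul]
      · intro i hiN hiu
        rw [Finset.mem_range] at hiN
        rw [Finset.mem_range, not_lt] at hiu
        have hqine : ¬ qq ^ i = u := by
          intro hqi
          have := Nat.lt_pow_self (n := i) (mz_one_lt_q (Fq := Fq))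
          omega
        rw [if_neg hqine]
    rw [Finset.sum_congr rfl h3, Finset.sum_comm]
    have h4 : ∀ i ∈ Finset.range (n + 1),
        (∑ u ∈ Finset.range (n + 1), if qq ^ i = u then
          (ιF Fq (ATG Fq i) / ιF Fq (toSt Fq (carlitzD Fq i))) * mzg Fq H (n - u) else 0)
        = (if qq ^ i ≤ n then
            (ιF Fq (ATG Fq i) / ιF Fq (toSt Fq (carlitzD Fq i))) * mzg Fq H (n - qq ^ i)
          else 0) := by
      intro i _
      rw [Finset.sum_ite_eq]
      simp only [Finset.mem_range, Nat.lt_succ_iff]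
    rw [Finset.sum_congr rfl h4, ← Finset.sum_filter]

lemma mz_Hrec (H : ℕ → Polynomial (Polynomial Fq)) (hH : IsATFamily Fq H) {n : ℕ} (hn : 1 ≤ n) :
    toS₂ Fq (H n) * ∏ i ∈ (Finset.range (n + 1)).filter (fun i => qq ^ i ≤ n),
        (toSt Fq (carlitzD Fq i) * toSt Fq (carlitzΓ Fq (n - qq ^ i + 1)))
      = ∑ i ∈ (Finset.range (n + 1)).filter (fun i => qq ^ i ≤ n),
          ATG Fq i * toS₂ Fq (H (n - qq ^ i)) * toSt Fq (carlitzΓ Fq (n + 1))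
            * ∏ i' ∈ ((Finset.range (n + 1)).filter (fun i => qq ^ i ≤ n)).erase i,
                (toSt Fq (carlitzD Fq i') * toSt Fq (carlitzΓ Fq (n - qq ^ i' + 1))) := by
  classical
  have hinj : Function.Injective (ιF Fq) := IsFractionRing.injective (ATRing Fq) _
  apply hinj
  have hne : ∀ x : ATRing Fq, x ≠ 0 → ιF Fq x ≠ 0 := by
    intro x hx h0
    exact hx (hinj (by rw [h0, map_zero]))
  have hΓne : ∀ m, ιF Fq (toSt Fq (carlitzΓ Fq m)) ≠ 0 :=
    fun m => hne _ (mz_toSt_ne (mz_Gamma_ne m))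
  have hDne : ∀ i, ιF Fq (toSt Fq (carlitzD Fq i)) ≠ 0 :=
    fun i => hne _ (mz_toSt_ne (mz_D_ne i))
  have hrec := (mz_g_eq H hH).2 n hn
  rw [map_mul, map_prod, map_sum]
  have hg : ιF Fq (toS₂ Fq (H n)) = mzg Fq H n * ιF Fq (toSt Fq (carlitzΓ Fq (n + 1))) := by
    unfold mzg
    rw [div_mul_cancel₀ _ (hΓne (n + 1))]
  rw [hg, hrec, Finset.sum_mul, Finset.sum_mul]
  apply Finset.sum_congr rfl
  intro i hi
  rw [map_mul, map_mul, map_mul, map_prod]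
  have hsplit : ∏ i' ∈ (Finset.range (n + 1)).filter (fun i => qq ^ i ≤ n),
      ιF Fq (toSt Fq (carlitzD Fq i') * toSt Fq (carlitzΓ Fq (n - qq ^ i' + 1)))
      = ιF Fq (toSt Fq (carlitzD Fq i) * toSt Fq (carlitzΓ Fq (n - qq ^ i + 1)))
        * ∏ i' ∈ ((Finset.range (n + 1)).filter (fun i => qq ^ i ≤ n)).erase i,
            ιF Fq (toSt Fq (carlitzD Fq i') * toSt Fq (carlitzΓ Fq (n - qq ^ i' + 1))) :=
    (Finset.mul_prod_erase _ _ hi).symm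
  rw [hsplit]
  unfold mzg
  rw [map_mul]
  have h1 := hDne i
  have h2 := hΓne (n - qq ^ i + 1)
  have h3 := hΓne (n + 1)
  field_simp

variable {P : Polynomial Fq}

lemma mz_val_base (hPirr : Irreducible P) (H : ℕ → Polynomial (Polynomial Fq))
    (hH : IsATFamily Fq H) (d : ℕ) :
    Ideal.Quotient.mk (Ideal.span {P}) (twistEval Fq (H 0) d)
      = Ideal.Quotient.mk (Ideal.span {P}) (carlitzΓ Fq 1) := by
  have h := (mz_g_eq H hH).1
  have h2 := congrArg (mzψ P d) h
  rw [mzψ_toS₂ hPirr, mzψ_toSt] at h2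
  exact h2

lemma mz_val_rec (hPm : P.Monic) (hPirr : Irreducible P)
    (H : ℕ → Polynomial (Polynomial Fq)) (hH : IsATFamily Fq H) {d : ℕ}
    {n : ℕ} (hn1 : 1 ≤ n) (hn : n < qq ^ P.natDegree) :
    Ideal.Quotient.mk (Ideal.span {P}) (twistEval Fq (H n) d)
        * Ring.inverse (Ideal.Quotient.mk (Ideal.span {P}) (carlitzΓ Fq (n + 1)))
      = ∑ i ∈ (Finset.range (n + 1)).filter (fun i => qq ^ i ≤ n),
          (Ideal.Quotient.mk (Ideal.span {P}) (mzG Fq d i)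
              * Ring.inverse (Ideal.Quotient.mk (Ideal.span {P}) (carlitzD Fq i)))
            * (Ideal.Quotient.mk (Ideal.span {P}) (twistEval Fq (H (n - qq ^ i)) d)
                * Ring.inverse (Ideal.Quotient.mk (Ideal.span {P})
                    (carlitzΓ Fq (n - qq ^ i + 1)))) := by
  classical
  haveI hmax : (Ideal.span {P}).IsMaximal := PrincipalIdealRing.isMaximal_of_irreducible hPirr
  letI : Field (Polynomial Fq ⧸ Ideal.span {P}) := Ideal.Quotient.field _
  simp only [Ring.inverse_eq_inv]
  have hψid := congrArg (mzψ P d) (mz_Hrec H hH hn1)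
  simp only [map_mul, map_sum, map_prod, mzψ_toSt, mzψ_ATG hPirr, mzψ_toS₂ hPirr] at hψid
  set π := Ideal.Quotient.mk (Ideal.span {P}) with hπdef
  set J := (Finset.range (n + 1)).filter (fun i => qq ^ i ≤ n) with hJ
  have hDne : ∀ i ∈ J, π (carlitzD Fq i) ≠ 0 := by
    intro i hi
    rw [hJ, Finset.mem_filter] at hi
    apply mz_pi_D_ne hPm hPirr
    by_contra hge
    have h2 : qq ^ P.natDegree ≤ qq ^ i :=
      Nat.pow_le_pow_right (by have := mz_one_lt_q (Fq := Fq); omega) (by omega)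
    have h1 : qq ^ i ≤ n := hi.2
    omega
  have hΓne : ∀ m, m < qq ^ P.natDegree → π (carlitzΓ Fq (m + 1)) ≠ 0 :=
    fun m hm => mz_pi_Gamma_ne hPm hPirr hm
  have hq1 : ∀ i ∈ J, 1 ≤ qq ^ i := fun i _ =>
    Nat.one_le_pow _ _ (by have := mz_one_lt_q (Fq := Fq); omega)
  have hMne : (∏ i ∈ J, (π (carlitzD Fq i) * π (carlitzΓ Fq (n - qq ^ i + 1)))) ≠ 0 := by
    apply Finset.prod_ne_zero_iff.mpr
    intro i hi
    exact mul_ne_zero (hDne i hi) (hΓne _ (by have := hq1 i hi; omega))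
  apply mul_right_cancel₀ (mul_ne_zero (hΓne n hn) hMne)
  calc π (twistEval Fq (H n) d) * (π (carlitzΓ Fq (n + 1)))⁻¹
        * (π (carlitzΓ Fq (n + 1)) * ∏ i ∈ J, (π (carlitzD Fq i) * π (carlitzΓ Fq (n - qq ^ i + 1))))
      = π (twistEval Fq (H n) d)
          * ∏ i ∈ J, (π (carlitzD Fq i) * π (carlitzΓ Fq (n - qq ^ i + 1))) := by
        have h3 := hΓne n hn
        field_simp
    _ = ∑ i ∈ J, π (mzG Fq d i) * π (twistEval Fq (H (n - qq ^ i)) d) * π (carlitzΓ Fq (n + 1))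
          * ∏ i' ∈ J.erase i, (π (carlitzD Fq i') * π (carlitzΓ Fq (n - qq ^ i' + 1))) := hψid
    _ = ∑ i ∈ J, (π (mzG Fq d i) * (π (carlitzD Fq i))⁻¹)
          * (π (twistEval Fq (H (n - qq ^ i)) d) * (π (carlitzΓ Fq (n - qq ^ i + 1)))⁻¹)
          * (π (carlitzΓ Fq (n + 1))
            * ∏ i ∈ J, (π (carlitzD Fq i) * π (carlitzΓ Fq (n - qq ^ i + 1)))) := by
        apply Finset.sum_congr rfl
        intro i hi
        rw [← Finset.mul_prod_erase J
          (fun i => π (carlitzD Fq i) * π (carlitzΓ Fq (n - qq ^ i + 1))) hi]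
        have h1 := hDne i hi
        have h2 := hΓne (n - qq ^ i) (by have := hq1 i hi; omega)
        field_simp
    _ = (∑ i ∈ J, (π (mzG Fq d i) * (π (carlitzD Fq i))⁻¹)
          * (π (twistEval Fq (H (n - qq ^ i)) d) * (π (carlitzΓ Fq (n - qq ^ i + 1)))⁻¹))
          * (π (carlitzΓ Fq (n + 1))
            * ∏ i ∈ J, (π (carlitzD Fq i) * π (carlitzΓ Fq (n - qq ^ i + 1)))) := by
        rw [Finset.sum_mul]

end AuxMZV7b

section AuxMZV8
set_option linter.unusedSectionVars false
set_option maxHeartbeats 1600000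
variable {Fq : Type} [Field Fq] [Fintype Fq] [DecidableEq Fq]

local notation "qq" => Fintype.card Fq

variable {P : Polynomial Fq}

lemma mz_main_eq (hPm : P.Monic) (hPirr : Irreducible P)
    (H : ℕ → Polynomial (Polynomial Fq)) (hH : IsATFamily Fq H) {d : ℕ}
    (hd : d < P.natDegree) :
    ∀ n, n < qq ^ P.natDegree →
      Ideal.Quotient.mk (Ideal.span {P}) (twistEval Fq (H n) d)
          * Ring.inverse (Ideal.Quotient.mk (Ideal.span {P}) (carlitzΓ Fq (n + 1)))
        = Ideal.Quotient.mk (Ideal.span {P}) (carlitzL Fq d) ^ (n + 1)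
            * ∑ b ∈ mzMon Fq d,
                Ring.inverse (Ideal.Quotient.mk (Ideal.span {P}) b) ^ (n + 1) := by
  haveI hmax : (Ideal.span {P}).IsMaximal := PrincipalIdealRing.isMaximal_of_irreducible hPirr
  letI : Field (Polynomial Fq ⧸ Ideal.span {P}) := Ideal.Quotient.field _
  intro n
  induction n using Nat.strong_induction_on with
  | _ n IH =>
    intro hn
    set π := Ideal.Quotient.mk (Ideal.span {P}) with hπdef
    rcases Nat.eq_zero_or_pos n with rfl | hn1
    · rw [mz_val_base hPirr H hH d]
      have hq0 : (0:ℕ) < qq ^ P.natDegree := by positivity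
      have h1 : π (carlitzΓ Fq 1) * Ring.inverse (π (carlitzΓ Fq 1)) = 1 := by
        rw [Ring.inverse_eq_inv]
        exact mul_inv_cancel₀ (mz_pi_Gamma_ne hPm hPirr (n := 0) hq0)
      rw [h1, pow_one]
      have h2 := mz_S_base hPm hPirr hd
      rw [← h2]
      congr 1
      apply Finset.sum_congr rfl
      intro b _
      rw [pow_one]
    · rw [mz_val_rec hPm hPirr H hH hn1 hn]
      have hq1 : ∀ i : ℕ, 1 ≤ qq ^ i := fun i =>
        Nat.one_le_pow _ _ (by have := mz_one_lt_q (Fq := Fq); omega)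
      have hIH : ∀ i ∈ (Finset.range (n + 1)).filter (fun i => qq ^ i ≤ n),
          π (twistEval Fq (H (n - qq ^ i)) d)
              * Ring.inverse (π (carlitzΓ Fq (n - qq ^ i + 1)))
            = π (carlitzL Fq d) ^ (n - qq ^ i + 1)
                * ∑ b ∈ mzMon Fq d, Ring.inverse (π b) ^ (n - qq ^ i + 1) := by
        intro i hi
        rw [Finset.mem_filter] at hi
        exact IH (n - qq ^ i) (by have := hq1 i; omega) (by omega)
      have hD_d : π (carlitzD Fq d) ≠ 0 := mz_pi_D_ne hPm hPirr hd
      have hco : ∀ j, j ≤ d → π (mzG Fq d j) * Ring.inverse (π (carlitzD Fq j))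
          = π (carlitzL Fq d) ^ qq ^ j
              * (π (mzc Fq d j) * Ring.inverse (π (carlitzD Fq d))) := by
        intro j hj
        rw [Ring.inverse_eq_inv, Ring.inverse_eq_inv]
        have h1 := congrArg π (mz_mzc_mul (Fq := Fq) d j hj)
        rw [map_mul, map_mul, map_pow] at h1
        have h2 := congrArg π (mz_G_mul (Fq := Fq) hj)
        rw [map_mul, map_pow, map_pow] at h2
        have hD_j : π (carlitzD Fq j) ≠ 0 := mz_pi_D_ne hPm hPirr (by omega)
        have hL' : π (carlitzL Fq (d - j)) ≠ 0 := mz_pi_L_ne hPm hPirr (by omega)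
        have hL'e : π (carlitzL Fq (d - j)) ^ qq ^ j ≠ 0 := pow_ne_zero _ hL'
        rw [← div_eq_mul_inv, ← div_eq_mul_inv, ← mul_div_assoc, div_eq_div_iff hD_j hD_d]
        apply mul_right_cancel₀ hL'e
        linear_combination π (carlitzD Fq d) * h2
          - π (carlitzL Fq d) ^ qq ^ j * h1
      calc ∑ i ∈ (Finset.range (n + 1)).filter (fun i => qq ^ i ≤ n),
              (π (mzG Fq d i) * Ring.inverse (π (carlitzD Fq i)))
                * (π (twistEval Fq (H (n - qq ^ i)) d)
                    * Ring.inverse (π (carlitzΓ Fq (n - qq ^ i + 1))))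
          = ∑ i ∈ (Finset.range (n + 1)).filter (fun i => qq ^ i ≤ n),
              (π (mzG Fq d i) * Ring.inverse (π (carlitzD Fq i)))
                * (π (carlitzL Fq d) ^ (n - qq ^ i + 1)
                    * ∑ b ∈ mzMon Fq d, Ring.inverse (π b) ^ (n - qq ^ i + 1)) :=
            Finset.sum_congr rfl (fun i hi => by rw [hIH i hi])
        _ = ∑ j ∈ (Finset.range (d + 1)).filter (fun j => qq ^ j ≤ n),
              (π (mzG Fq d j) * Ring.inverse (π (carlitzD Fq j)))
                * (π (carlitzL Fq d) ^ (n - qq ^ j + 1)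
                    * ∑ b ∈ mzMon Fq d, Ring.inverse (π b) ^ (n - qq ^ j + 1)) := by
            symm
            apply Finset.sum_subset
            · intro j hj
              rw [Finset.mem_filter] at hj ⊢
              refine ⟨Finset.mem_range.mpr ?_, hj.2⟩
              have h5 := Nat.lt_pow_self (n := j) (mz_one_lt_q (Fq := Fq))
              have h6 := hj.2
              omega
            · intro i hi hni
              rw [Finset.mem_filter] at hi hni
              have hid : d < i := by
                by_contra hle
                exact hni ⟨Finset.mem_range.mpr (by omega), hi.2⟩
              rw [mz_G_gt hid, map_zero, zero_mul, zero_mul]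
        _ = π (carlitzL Fq d) ^ (n + 1) * (Ring.inverse (π (carlitzD Fq d))
              * ∑ j ∈ (Finset.range (d + 1)).filter (fun j => qq ^ j ≤ n),
                  π (mzc Fq d j)
                    * ∑ b ∈ mzMon Fq d, Ring.inverse (π b) ^ (n - qq ^ j + 1)) := by
            rw [Finset.mul_sum, Finset.mul_sum]
            apply Finset.sum_congr rfl
            intro j hj
            rw [Finset.mem_filter] at hj
            rw [hco j (by have := Finset.mem_range.mp hj.1; omega)]
            have he : qq ^ j + (n - qq ^ j + 1) = n + 1 := by
              have h6 := hj.2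
              omega
            calc π (carlitzL Fq d) ^ qq ^ j * (π (mzc Fq d j) * Ring.inverse (π (carlitzD Fq d)))
                  * (π (carlitzL Fq d) ^ (n - qq ^ j + 1)
                      * ∑ b ∈ mzMon Fq d, Ring.inverse (π b) ^ (n - qq ^ j + 1))
                = (π (carlitzL Fq d) ^ qq ^ j * π (carlitzL Fq d) ^ (n - qq ^ j + 1))
                    * (Ring.inverse (π (carlitzD Fq d)) * (π (mzc Fq d j)
                      * ∑ b ∈ mzMon Fq d, Ring.inverse (π b) ^ (n - qq ^ j + 1))) := by ring
              _ = π (carlitzL Fq d) ^ (n + 1) * (Ring.inverse (π (carlitzD Fq d))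
                    * (π (mzc Fq d j)
                      * ∑ b ∈ mzMon Fq d, Ring.inverse (π b) ^ (n - qq ^ j + 1))) := by
                  rw [← pow_add, he]
        _ = π (carlitzL Fq d) ^ (n + 1)
              * ∑ b ∈ mzMon Fq d, Ring.inverse (π b) ^ (n + 1) := by
            congr 1
            have hSrec := mz_S_rec hPm hPirr hd (s := n + 1) (by omega)
            have hJeq : (Finset.range (d + 1)).filter (fun j => qq ^ j < n + 1)
                = (Finset.range (d + 1)).filter (fun j => qq ^ j ≤ n) := by
              apply Finset.filter_congr
              intro x _
              simp [Nat.lt_succ_iff]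
            rw [hJeq] at hSrec
            have hsub : ∀ j ∈ (Finset.range (d + 1)).filter (fun j => qq ^ j ≤ n),
                π (mzc Fq d j) * ∑ b ∈ mzMon Fq d, Ring.inverse (π b) ^ (n + 1 - qq ^ j)
                  = π (mzc Fq d j)
                      * ∑ b ∈ mzMon Fq d, Ring.inverse (π b) ^ (n - qq ^ j + 1) := by
              intro j hj
              rw [Finset.mem_filter] at hj
              rw [show n + 1 - qq ^ j = n - qq ^ j + 1 from by have := hj.2; omega]
            rw [Finset.sum_congr rfl hsub] at hSrec
            rw [← hSrec, Ring.inverse_eq_inv]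
            rw [inv_mul_cancel_left₀ hD_d]

lemma mz_key (hPm : P.Monic) (hPirr : Irreducible P)
    (H : ℕ → Polynomial (Polynomial Fq)) (hH : IsATFamily Fq H) {d : ℕ}
    (hd : d < P.natDegree) {s : ℕ} (hs1 : 1 ≤ s) (hs : s - 1 < qq ^ P.natDegree) :
    ∑ b ∈ mzMon Fq d, Ring.inverse (Ideal.Quotient.mk (Ideal.span {P}) b) ^ s
      = Ideal.Quotient.mk (Ideal.span {P}) (twistEval Fq (H (s - 1)) d)
          * Ring.inverse (Ideal.Quotient.mk (Ideal.span {P}) (carlitzΓ Fq s))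
          * Ring.inverse (Ideal.Quotient.mk (Ideal.span {P}) (carlitzL Fq d)) ^ s := by
  haveI hmax : (Ideal.span {P}).IsMaximal := PrincipalIdealRing.isMaximal_of_irreducible hPirr
  letI : Field (Polynomial Fq ⧸ Ideal.span {P}) := Ideal.Quotient.field _
  have h := mz_main_eq hPm hPirr H hH hd (s - 1) hs
  rw [show s - 1 + 1 = s from by omega] at h
  simp only [Ring.inverse_eq_inv] at h ⊢
  set π := Ideal.Quotient.mk (Ideal.span {P}) with hπdef
  have hL : π (carlitzL Fq d) ≠ 0 := mz_pi_L_ne hPm hPirr hd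
  have hLs : π (carlitzL Fq d) ^ s ≠ 0 := pow_ne_zero _ hL
  have h2 : ∑ b ∈ mzMon Fq d, (π b)⁻¹ ^ s
      = (π (carlitzL Fq d) ^ s)⁻¹ * (π (twistEval Fq (H (s - 1)) d)
          * (π (carlitzΓ Fq s))⁻¹) := by
    rw [h, inv_mul_cancel_left₀ hLs]
  rw [h2, inv_pow]
  ring

end AuxMZV8

section MainMZV
set_option linter.unusedSectionVars false
set_option maxHeartbeats 3200000
variable {Fq : Type} [Field Fq] [Fintype Fq]

local notation "qq" => Fintype.card Fq

theorem mz_final [DecidableEq Fq]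
    (H : ℕ → Polynomial (Polynomial Fq)) (hH : IsATFamily Fq H)
    (P : Polynomial Fq) (hPm : P.Monic) (hPirr : Irreducible P)
    {r : ℕ} (s : Fin r → ℕ) (hs : ∀ l, 0 < s l)
    (hPΓ : ¬ P ∣ ∏ l, carlitzΓ Fq (s l)) :
    (∑ᶠ a ∈ {a : Fin r → Polynomial Fq |
        (∀ l, (a l).Monic) ∧ (∀ l l', l < l' → (a l').natDegree < (a l).natDegree) ∧
        (∀ l, (a l).natDegree < P.natDegree)},
      ∏ l, Ring.inverse (Ideal.Quotient.mk (Ideal.span {P}) (a l)) ^ s l) =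
    Ring.inverse (Ideal.Quotient.mk (Ideal.span {P}) (∏ l, carlitzΓ Fq (s l))) *
      ∑ᶠ j ∈ {j : Fin r → ℕ | ∀ l, j l ≤ (H (s l - 1)).natDegree},
        Ideal.Quotient.mk (Ideal.span {P}) ((X : Polynomial Fq) ^ (∑ l, j l)) *
          ∑ᶠ ι ∈ {ι : Fin r → ℕ |
              (∀ l l', l < l' → ι l' < ι l) ∧ (∀ l, ι l < P.natDegree)},
            ∏ l,
              Ideal.Quotient.mk (Ideal.span {P}) ((H (s l - 1)).coeff (j l)) ^
                  (Fintype.card Fq) ^ ι l *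
                Ring.inverse (Ideal.Quotient.mk (Ideal.span {P}) (carlitzL Fq (ι l))) ^ s l := by
  classical
  haveI hmax : (Ideal.span {P}).IsMaximal := PrincipalIdealRing.isMaximal_of_irreducible hPirr
  letI : Field (Polynomial Fq ⧸ Ideal.span {P}) := Ideal.Quotient.field _
  have hPl : ∀ l, ¬ P ∣ carlitzΓ Fq (s l) := by
    intro l hdvd
    exact hPΓ (hdvd.trans (Finset.dvd_prod_of_mem _ (Finset.mem_univ l)))
  have hslt : ∀ l, s l - 1 < qq ^ P.natDegree := fun l => mz_s_lt hPm hPirr (hs l) (hPl l)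
  set π := Ideal.Quotient.mk (Ideal.span {P}) with hπdef
  set Tι : Finset (Fin r → ℕ) :=
    (Fintype.piFinset fun _ => Finset.range P.natDegree).filter
      (fun ι => ∀ l l', l < l' → ι l' < ι l) with hTι
  set Tj : Finset (Fin r → ℕ) :=
    Fintype.piFinset (fun l => Finset.range ((H (s l - 1)).natDegree + 1)) with hTj
  set TA : Finset (Fin r → Polynomial Fq) :=
    Tι.biUnion (fun ι => Fintype.piFinset (fun l => mzMon Fq (ι l))) with hTA
  have hmemTι : ∀ ι : Fin r → ℕ, ι ∈ Tι
      ↔ ((∀ l l', l < l' → ι l' < ι l) ∧ ∀ l, ι l < P.natDegree) := by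
    intro ι
    rw [hTι, Finset.mem_filter, Fintype.mem_piFinset]
    simp only [Finset.mem_range]
    tauto
  -- identify the three index sets with finsets
  have hset1 : {a : Fin r → Polynomial Fq |
      (∀ l, (a l).Monic) ∧ (∀ l l', l < l' → (a l').natDegree < (a l).natDegree) ∧
      (∀ l, (a l).natDegree < P.natDegree)} = ↑TA := by
    ext a
    simp only [Set.mem_setOf_eq, Finset.mem_coe]
    rw [hTA, Finset.mem_biUnion]
    constructor
    · rintro ⟨hmon, hanti, hdeg⟩
      refine ⟨fun l => (a l).natDegree, (hmemTι _).mpr ⟨hanti, hdeg⟩, ?_⟩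
      rw [Fintype.mem_piFinset]
      intro l
      exact mz_mem_mzMon.mpr ⟨hmon l, rfl⟩
    · rintro ⟨ι, hι, hmem⟩
      rw [Fintype.mem_piFinset] at hmem
      obtain ⟨hιanti, hιD⟩ := (hmemTι ι).mp hι
      have hdeg : ∀ l, (a l).natDegree = ι l := fun l => (mz_mem_mzMon.mp (hmem l)).2
      exact ⟨fun l => (mz_mem_mzMon.mp (hmem l)).1,
        fun l l' h => by rw [hdeg l, hdeg l']; exact hιanti l l' h,
        fun l => by rw [hdeg l]; exact hιD l⟩
  have hset2 : {j : Fin r → ℕ | ∀ l, j l ≤ (H (s l - 1)).natDegree} = ↑Tj := by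
    ext j
    simp only [Set.mem_setOf_eq, Finset.mem_coe]
    rw [hTj, Fintype.mem_piFinset]
    simp only [Finset.mem_range, Nat.lt_succ_iff]
  have hset3 : {ι : Fin r → ℕ |
      (∀ l l', l < l' → ι l' < ι l) ∧ (∀ l, ι l < P.natDegree)} = ↑Tι := by
    ext ι
    simp only [Set.mem_setOf_eq, Finset.mem_coe]
    rw [hmemTι]
  rw [hset1, finsum_mem_coe_finset]
  simp only [hset2, hset3, finsum_mem_coe_finset]
  simp only [Ring.inverse_eq_inv]
  -- LHS
  have hdisj : (↑Tι : Set (Fin r → ℕ)).PairwiseDisjoint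
      (fun ι => Fintype.piFinset (fun l => mzMon Fq (ι l))) := by
    intro ι1 h1 ι2 h2 hne
    rw [Function.onFun, Finset.disjoint_left]
    intro a ha1 ha2
    apply hne
    funext l
    rw [Fintype.mem_piFinset] at ha1 ha2
    have e1 := (mz_mem_mzMon.mp (ha1 l)).2
    have e2 := (mz_mem_mzMon.mp (ha2 l)).2
    omega
  rw [Finset.sum_biUnion hdisj]
  have hLHS : ∀ ι ∈ Tι, (∑ a ∈ Fintype.piFinset (fun l => mzMon Fq (ι l)),
      ∏ l, (π (a l))⁻¹ ^ s l)
      = ∏ l, (π (twistEval Fq (H (s l - 1)) (ι l))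
          * (π (carlitzΓ Fq (s l)))⁻¹ * ((π (carlitzL Fq (ι l)))⁻¹) ^ s l) := by
    intro ι hι
    have hpi := Finset.prod_univ_sum (fun l => mzMon Fq (ι l))
      (fun l b => (π b)⁻¹ ^ s l)
    rw [← hpi]
    apply Finset.prod_congr rfl
    intro l _
    have hkey := mz_key hPm hPirr H hH (d := ι l) (((hmemTι ι).mp hι).2 l) (hs l) (hslt l)
    simp only [Ring.inverse_eq_inv] at hkey
    exact hkey
  rw [Finset.sum_congr rfl hLHS]
  -- RHS
  have htw : ∀ (l : Fin r) (i : ℕ), π (twistEval Fq (H (s l - 1)) i)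
      = ∑ t ∈ Finset.range ((H (s l - 1)).natDegree + 1),
          π ((H (s l - 1)).coeff t) ^ qq ^ i * (π X) ^ t := by
    intro l i
    rw [twistEval, map_sum]
    apply Finset.sum_congr rfl
    intro t _
    rw [map_mul, map_pow, map_pow]
  have hΓinv : (π (∏ l, carlitzΓ Fq (s l)))⁻¹ = ∏ l, (π (carlitzΓ Fq (s l)))⁻¹ := by
    rw [map_prod, ← Finset.prod_inv_distrib]
  rw [hΓinv]
  have hswap : ∀ j ∈ Tj, π ((X : Polynomial Fq) ^ ∑ l, j l)
        * ∑ ι ∈ Tι, ∏ l, (π ((H (s l - 1)).coeff (j l)) ^ qq ^ ι l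
            * ((π (carlitzL Fq (ι l)))⁻¹) ^ s l)
      = ∑ ι ∈ Tι, ∏ l, ((π X) ^ j l * π ((H (s l - 1)).coeff (j l)) ^ qq ^ ι l
          * ((π (carlitzL Fq (ι l)))⁻¹) ^ s l) := by
    intro j _
    rw [Finset.mul_sum]
    apply Finset.sum_congr rfl
    intro ι _
    rw [map_pow, ← Finset.prod_pow_eq_pow_sum, ← Finset.prod_mul_distrib]
    apply Finset.prod_congr rfl
    intro l _
    ring
  rw [Finset.sum_congr rfl hswap, Finset.sum_comm]
  rw [Finset.mul_sum]
  apply Finset.sum_congr rfl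
  intro ι hι
  -- inner j-sum for fixed ι
  have hinner : ∑ j ∈ Tj, ∏ l, ((π X) ^ j l * π ((H (s l - 1)).coeff (j l)) ^ qq ^ ι l
      * ((π (carlitzL Fq (ι l)))⁻¹) ^ s l)
      = ∏ l, (π (twistEval Fq (H (s l - 1)) (ι l)) * ((π (carlitzL Fq (ι l)))⁻¹) ^ s l) := by
    have hpi := Finset.prod_univ_sum
      (fun l => Finset.range ((H (s l - 1)).natDegree + 1))
      (fun l t => (π X) ^ t * π ((H (s l - 1)).coeff t) ^ qq ^ ι l
        * ((π (carlitzL Fq (ι l)))⁻¹) ^ s l)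
    rw [hTj, ← hpi]
    apply Finset.prod_congr rfl
    intro l _
    rw [htw l (ι l), Finset.sum_mul]
    apply Finset.sum_congr rfl
    intro t _
    ring
  rw [hinner, ← Finset.prod_mul_distrib]
  apply Finset.prod_congr rfl
  intro l _
  ring

end MainMZV
/-- Let `P ∈ A` be monic irreducible, `s = (s_1,…,s_r) ∈ ℕ^r` with
`P ∤ Γ_{s_1} ⋯ Γ_{s_r}`, and expand `H_{s_i - 1} = Σ_{j=0}^{m_i} u_{ij} t^j`. Then the
`P`-component of the finite multiple zeta value satisfies
`ζ_P(s) = (1/Γ_s) Σ_{j} θ^{j_1 + ⋯ + j_r} Σ_{deg P > i_1 > ⋯ > i_r ≥ 0}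
  (u_{1 j_1}^{q^{i_1}} ⋯ u_{r j_r}^{q^{i_r}})/(L_{i_1}^{s_1} ⋯ L_{i_r}^{s_r})` in `A/(P)`.
Inverses in `A/(P)` are taken via `Ring.inverse` (all elements inverted are units). -/
theorem finite_mzv_formula_P_component
    (H : ℕ → Polynomial (Polynomial Fq)) (hH : IsATFamily Fq H)
    (P : Polynomial Fq) (hPm : P.Monic) (hPirr : Irreducible P)
    {r : ℕ} (s : Fin r → ℕ) (hs : ∀ l, 0 < s l)
    (hPΓ : ¬ P ∣ ∏ l, carlitzΓ Fq (s l)) :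
    (∑ᶠ a ∈ {a : Fin r → Polynomial Fq |
        (∀ l, (a l).Monic) ∧ (∀ l l', l < l' → (a l').natDegree < (a l).natDegree) ∧
        (∀ l, (a l).natDegree < P.natDegree)},
      ∏ l, Ring.inverse (Ideal.Quotient.mk (Ideal.span {P}) (a l)) ^ s l) =
    Ring.inverse (Ideal.Quotient.mk (Ideal.span {P}) (∏ l, carlitzΓ Fq (s l))) *
      ∑ᶠ j ∈ {j : Fin r → ℕ | ∀ l, j l ≤ (H (s l - 1)).natDegree},
        Ideal.Quotient.mk (Ideal.span {P}) ((X : Polynomial Fq) ^ (∑ l, j l)) *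
          ∑ᶠ ι ∈ {ι : Fin r → ℕ |
              (∀ l l', l < l' → ι l' < ι l) ∧ (∀ l, ι l < P.natDegree)},
            ∏ l,
              Ideal.Quotient.mk (Ideal.span {P}) ((H (s l - 1)).coeff (j l)) ^
                  (Fintype.card Fq) ^ ι l *
                Ring.inverse (Ideal.Quotient.mk (Ideal.span {P}) (carlitzL Fq (ι l))) ^ s l := by
  letI := Classical.decEq Fq
  exact mz_final H hH P hPm hPirr s hs hPΓ
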